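/- arXiv:quant-ph/0007098 — 9 statements merged into one kernel-verified Lean document; each statement's English description precedes it below -/
import Mathlib

section
/- For any complex numbers x, y, z, t, there exist real numbers θ and ω such that (x − t) · cos (2θ) + sin (2θ) · (y · exp (−I·ω) + z · exp (I·ω)) = 0. -/
open Complex

/-- The key solvability claim in the 2×2 equidiagonalization proof: for any complex
`x, y, z, t` there are real angles `θ`, `ω` with
`(x − t)·cos 2θ + sin 2θ·(y·e^{−iω} + z·e^{iω}) = 0`. -/
theorem exists_angles_equidiagonalize (x y z t : ℂ) :
    ∃ θ ω : ℝ,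
      (x - t) * (Real.cos (2 * θ) : ℝ) +
        (Real.sin (2 * θ) : ℝ) * (y * Complex.exp (-Complex.I * (ω : ℂ)) +
          z * Complex.exp (Complex.I * (ω : ℂ))) = 0 := by
  classical
  set a : ℂ := x - t with ha
  by_cases h0 : a = 0
  · refine ⟨0, 0, ?_⟩
    simp [← ha, h0]
  · set u : ℂ := (y + z) * (starRingEnd ℂ) a with hu
    set v : ℂ := (z - y) * (starRingEnd ℂ) a with hv
    set A : ℝ := u.im with hA
    set B : ℝ := v.re with hB
    set w : ℂ := (B : ℂ) - (A : ℂ) * Complex.I with hw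
    set ω : ℝ := Complex.arg w with hω
    have hwre : w.re = B := by simp [hw]
    have hwim : w.im = -A := by simp [hw]
    have hf : A * Real.cos ω + B * Real.sin ω = 0 := by
      by_cases hw0 : w = 0
      · have hB0 : B = 0 := by rw [← hwre, hw0]; simp
        have hA0 : A = 0 := by
          have := congrArg Complex.im hw0
          rw [hwim] at this; simpa using this
        simp [hA0, hB0]
      · have hc := Complex.cos_arg hw0
        have hs := Complex.sin_arg w
        rw [hω, hc, hs, hwre, hwim]
        ring
    set S : ℂ := y * Complex.exp (-Complex.I * (ω : ℂ)) +
          z * Complex.exp (Complex.I * (ω : ℂ)) with hS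
    have hSexp : S = (y + z) * (Real.cos ω : ℂ) + (z - y) * (Real.sin ω : ℂ) * Complex.I := by
      rw [hS, show -Complex.I * (ω : ℂ) = ((-ω : ℝ) : ℂ) * Complex.I by push_cast; ring,
          show Complex.I * (ω : ℂ) = ((ω : ℝ) : ℂ) * Complex.I by ring,
          Complex.exp_mul_I, Complex.exp_mul_I]
      simp only [Complex.ofReal_neg, Complex.cos_neg, Complex.sin_neg,
        Complex.ofReal_cos, Complex.ofReal_sin]
      ring
    have hIm : (S * (starRingEnd ℂ) a).im = 0 := by
      have h1 : S * (starRingEnd ℂ) a = u * (Real.cos ω : ℂ) + v * (Real.sin ω : ℂ) * Complex.I := by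
        rw [hSexp, hu, hv]; ring
      rw [h1]
      simp only [Complex.add_im, Complex.mul_im, Complex.mul_re, Complex.I_re,
        Complex.I_im, Complex.ofReal_re, Complex.ofReal_im, ← hA, ← hB]
      ring_nf
      ring_nf at hf
      linarith [hf]
    have hreal : S * (starRingEnd ℂ) a = ((S * (starRingEnd ℂ) a).re : ℂ) := by
      rw [← Complex.re_add_im (S * (starRingEnd ℂ) a), hIm]
      simp
    have hnsq : (Complex.normSq a : ℝ) ≠ 0 := by
      simpa [Complex.normSq_eq_zero] using h0
    set c : ℝ := (S * (starRingEnd ℂ) a).re / Complex.normSq a with hc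
    have hconj : (starRingEnd ℂ) a ≠ 0 := by simpa using h0
    have hSa : S = (c : ℂ) * a := by
      have h1 : S * (starRingEnd ℂ) a = ((c : ℂ) * a) * (starRingEnd ℂ) a := by
        rw [mul_assoc, Complex.mul_conj, hreal, hc]
        push_cast
        rw [div_mul_cancel₀]
        exact_mod_cast hnsq
      exact mul_right_cancel₀ hconj h1
    set w2 : ℂ := ((-c : ℝ) : ℂ) + Complex.I with hw2
    have hw2ne : w2 ≠ 0 := by
      intro h
      have := congrArg Complex.im h
      simp [hw2] at this
    have hcos := Complex.cos_arg hw2ne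
    have hsin := Complex.sin_arg w2
    have hw2re : w2.re = -c := by simp [hw2]
    have hw2im : w2.im = 1 := by simp [hw2]
    refine ⟨Complex.arg w2 / 2, ω, ?_⟩
    rw [show 2 * (Complex.arg w2 / 2) = Complex.arg w2 by ring, hcos, hsin, hw2re, hw2im,
      ← hS, hSa]
    push_cast
    ring
end

section
/- For every 2×2 complex matrix M, there exists a 2×2 unitary matrix U such that the two diagonal entries of U * M * Uᴴ are equal (equivalently, both equal trace M / 2). -/
open scoped Matrix
open Complex

lemma aux_xy (A B : ℝ) : ∃ x y : ℝ, x^2 + y^2 = 1 ∧ x*A + y*B = 0 := by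
  by_cases h : A = 0 ∧ B = 0
  · exact ⟨1, 0, by norm_num, by simp [h.1, h.2]⟩
  · have hpos : 0 < A^2 + B^2 := by
      rcases not_and_or.mp h with h | h <;> positivity
    have h2 : (Real.sqrt (A^2+B^2))^2 = A^2+B^2 := Real.sq_sqrt hpos.le
    refine ⟨B / Real.sqrt (A^2+B^2), -A / Real.sqrt (A^2+B^2), ?_, by ring⟩
    rw [div_pow, div_pow, h2, ← add_div, div_eq_one_iff_eq hpos.ne']
    ring

lemma aux_st (n R : ℝ) (hn : 0 < n) :
    ∃ s t : ℝ, s^2 + t^2 = 1 ∧ (s^2 - t^2)*n + 2*s*t*R = 0 := by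
  obtain ⟨r, hrn⟩ : ∃ r : ℝ, r * n = 2*R := ⟨2*R/n, by field_simp⟩
  obtain ⟨m, hm⟩ : ∃ m : ℝ, m^2 + r*m - 1 = 0 := by
    refine ⟨(-r + Real.sqrt (r^2+4))/2, ?_⟩
    have hsq : (Real.sqrt (r^2+4))^2 = r^2+4 := Real.sq_sqrt (by positivity)
    field_simp
    nlinarith [hsq]
  have hKpos : (0:ℝ) < 1 + m^2 := by positivity
  have hK2 : (Real.sqrt (1+m^2))^2 = 1+m^2 := Real.sq_sqrt hKpos.le
  have hKne : Real.sqrt (1+m^2) ≠ 0 := by positivity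
  refine ⟨m / Real.sqrt (1+m^2), 1 / Real.sqrt (1+m^2), ?_, ?_⟩
  · rw [div_pow, div_pow, hK2, ← add_div, div_eq_one_iff_eq hKpos.ne']
    ring
  · field_simp
    linear_combination n*hm - m*hrn

/-- Theorem 2 of the paper: every 2×2 complex matrix `M` can be "equidiagonalized" by a
unitary conjugation: there is a unitary `U` with the two diagonal entries of `U M Uᴴ`
equal (hence both equal to `trace M / 2`). -/
theorem exists_unitary_equidiagonalize_two (M : Matrix (Fin 2) (Fin 2) ℂ) :
    ∃ U ∈ Matrix.unitaryGroup (Fin 2) ℂ,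
      (U * M * Uᴴ) 0 0 = (U * M * Uᴴ) 1 1 := by
  by_cases hM : M 0 0 = M 1 1
  · refine ⟨1, one_mem _, ?_⟩
    simp [hM]
  · have hD : M 0 0 - M 1 1 ≠ 0 := sub_ne_zero.mpr hM
    obtain ⟨x, y, hxy1, hxy0⟩ := aux_xy
      ((M 0 1 * (starRingEnd ℂ) (M 0 0 - M 1 1)).im + (M 1 0 * (starRingEnd ℂ) (M 0 0 - M 1 1)).im)
      ((M 1 0 * (starRingEnd ℂ) (M 0 0 - M 1 1)).re - (M 0 1 * (starRingEnd ℂ) (M 0 0 - M 1 1)).re)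
    have him : ((((x:ℂ) - y*I)*(M 0 1) + ((x:ℂ) + y*I)*(M 1 0)) * (starRingEnd ℂ) (M 0 0 - M 1 1)).im = 0 := by
      simp only [Complex.mul_im, Complex.mul_re, Complex.add_im, Complex.add_re,
        Complex.sub_im, Complex.sub_re, Complex.ofReal_re, Complex.ofReal_im,
        Complex.I_re, Complex.I_im, Complex.conj_re, Complex.conj_im] at hxy0 ⊢
      linear_combination hxy0
    have hcR : (((x:ℂ) - y*I)*(M 0 1) + ((x:ℂ) + y*I)*(M 1 0)) * (starRingEnd ℂ) (M 0 0 - M 1 1)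
        = (((((x:ℂ) - y*I)*(M 0 1) + ((x:ℂ) + y*I)*(M 1 0)) * (starRingEnd ℂ) (M 0 0 - M 1 1)).re : ℂ) :=
      Complex.ext (by rw [Complex.ofReal_re]) (by rw [Complex.ofReal_im, him])
    have hnsq : 0 < Complex.normSq (M 0 0 - M 1 1) := Complex.normSq_pos.mpr hD
    obtain ⟨s, t, hst1, hst0⟩ := aux_st (Complex.normSq (M 0 0 - M 1 1))
      ((((x:ℂ) - y*I)*(M 0 1) + ((x:ℂ) + y*I)*(M 1 0)) * (starRingEnd ℂ) (M 0 0 - M 1 1)).re hnsq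
    have hst1C : (s:ℂ)^2 + (t:ℂ)^2 = 1 := by exact_mod_cast congrArg (Complex.ofReal) hst1
    have hxy1C : (x:ℂ)^2 + (y:ℂ)^2 = 1 := by exact_mod_cast congrArg (Complex.ofReal) hxy1
    have hst0C : ((s:ℂ)^2 - (t:ℂ)^2) * ((M 0 0 - M 1 1) * (starRingEnd ℂ) (M 0 0 - M 1 1))
        + 2*s*t*((((x:ℂ) - y*I)*(M 0 1) + ((x:ℂ) + y*I)*(M 1 0)) * (starRingEnd ℂ) (M 0 0 - M 1 1)) = 0 := by
      rw [Complex.mul_conj, hcR]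
      exact_mod_cast congrArg (Complex.ofReal) hst0
    have hDc : (starRingEnd ℂ) (M 0 0 - M 1 1) ≠ 0 := by
      intro h
      exact hD (by simpa using congrArg (starRingEnd ℂ) h)
    have HG : ((s:ℂ)^2 - (t:ℂ)^2) * (M 0 0 - M 1 1)
        + 2*s*t*(((x:ℂ) - y*I)*(M 0 1) + ((x:ℂ) + y*I)*(M 1 0)) = 0 := by
      apply mul_right_cancel₀ hDc
      rw [zero_mul]
      linear_combination hst0C
    refine ⟨!![(s:ℂ), ((x:ℂ) + y*I)*t; -(((x:ℂ) - y*I)*t), (s:ℂ)], ?_, ?_⟩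
    · rw [Matrix.mem_unitaryGroup_iff]
      ext i j
      fin_cases i <;> fin_cases j <;>
        simp [Matrix.mul_apply, Fin.sum_univ_two, Matrix.conjTranspose_apply,
          Matrix.one_apply, Complex.conj_ofReal] <;>
        first
          | ring1
          | linear_combination hst1C + (t:ℂ)^2*hxy1C - (y:ℂ)^2*(t:ℂ)^2*Complex.I_sq
    · simp only [Matrix.mul_apply, Fin.sum_univ_two, Matrix.conjTranspose_apply,
        Matrix.cons_val', Matrix.cons_val_zero, Matrix.cons_val_one, Matrix.head_cons,
        Matrix.head_fin_const, Matrix.empty_val', Matrix.cons_val_fin_one, Matrix.of_apply,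
        star_mul', star_add, star_neg, star_sub, Complex.star_def, map_mul, map_add,
        map_sub, map_neg, Complex.conj_ofReal, Complex.conj_I]
      linear_combination HG - (t:ℂ)^2*(M 0 0 - M 1 1)*hxy1C +
        (y:ℂ)^2*(t:ℂ)^2*(M 0 0 - M 1 1)*Complex.I_sq
end

section
/- For every 2×2 complex matrix M with trace M = 0, there exists a 2×2 unitary matrix U such that both diagonal entries of U * M * Uᴴ are zero. -/
open scoped Matrix
open Complex

private lemma zd_key (M : Matrix (Fin 2) (Fin 2) ℂ) (hM : M.trace = 0) (x y : ℂ)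
    (hn : x * (starRingEnd ℂ) x + y * (starRingEnd ℂ) y = 1)
    (hz : M 0 0 * (x * (starRingEnd ℂ) x - y * (starRingEnd ℂ) y)
        + M 0 1 * (x * (starRingEnd ℂ) y) + M 1 0 * ((starRingEnd ℂ) x * y) = 0) :
    ∃ U ∈ Matrix.unitaryGroup (Fin 2) ℂ, ∀ i : Fin 2, (U * M * Uᴴ) i i = 0 := by
  have hd : M 1 1 = - M 0 0 := by
    have h := Matrix.trace_fin_two M
    rw [hM] at h; linear_combination -h
  refine ⟨!![x, y; -(starRingEnd ℂ) y, (starRingEnd ℂ) x], ?_, ?_⟩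
  · rw [Matrix.mem_unitaryGroup_iff]
    ext i j
    fin_cases i <;> fin_cases j <;>
      simp [Matrix.mul_apply, Fin.sum_univ_two, Matrix.one_apply] <;>
      ring_nf <;> linear_combination hn
  · intro i
    fin_cases i <;>
      simp [Matrix.mul_apply, Fin.sum_univ_two, Matrix.conjTranspose_apply, hd,
        Matrix.vecMul, dotProduct] <;>
      ring_nf <;>
      first
        | linear_combination hz
        | linear_combination 2 * hz
        | linear_combination -hz

private lemma zd_t (a b c : ℂ) (ha : a ≠ 0) :
    ∃ t : ℂ, a * (1 - t * (starRingEnd ℂ) t) + b * (starRingEnd ℂ) t + c * t = 0 := by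
  set β := b / a with hβ
  set γ := c / a with hγ
  set d := γ - (starRingEnd ℂ) β with hdd
  obtain ⟨z, hz⟩ := IsAlgClosed.exists_pow_nat_eq (k := ℂ)
    (if d = 0 then 1 else (starRingEnd ℂ) d / d) two_pos
  have hz1 : z * (starRingEnd ℂ) z = 1 := by
    have h1 : Complex.normSq (z ^ 2) = 1 := by
      rw [hz]
      split_ifs with h
      · simp
      · rw [normSq_div, normSq_conj, div_self (fun hh => h (normSq_eq_zero.mp hh))]
    have h2 : Complex.normSq z = 1 := by
      rw [map_pow] at h1
      nlinarith [Complex.normSq_nonneg z]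
    rw [Complex.mul_conj, h2]; simp
  have hdz : (γ - (starRingEnd ℂ) β) * z ^ 2 = (starRingEnd ℂ) γ - β := by
    by_cases h : d = 0
    · have h' : γ = (starRingEnd ℂ) β := by
        have := sub_eq_zero.mp (hdd ▸ h)
        simpa [hdd, sub_eq_zero] using h
      rw [h']; simp
    · rw [← hdd, hz, if_neg h, hdd]
      field_simp [hdd ▸ h]
      simp
  set μ := γ * z + β * (starRingEnd ℂ) z with hμ
  have hμeq : γ * z + β * (starRingEnd ℂ) z = ((γ * z + β * (starRingEnd ℂ) z).re : ℂ) := by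
    rw [eq_comm, ← Complex.conj_eq_iff_re]
    simp only [map_add, map_mul, Complex.conj_conj]
    linear_combination (-(starRingEnd ℂ) z) * hdz + ((γ - (starRingEnd ℂ) β) * z) * hz1
  set m := (γ * z + β * (starRingEnd ℂ) z).re with hm
  set u := (m + Real.sqrt (m ^ 2 + 4)) / 2 with hu
  have hsq : Real.sqrt (m ^ 2 + 4) ^ 2 = m ^ 2 + 4 :=
    Real.sq_sqrt (by positivity)
  have huq : u ^ 2 = m * u + 1 := by rw [hu]; nlinarith [hsq]
  have huC : (u : ℂ) ^ 2 = (m : ℂ) * u + 1 := by exact_mod_cast huq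
  have hb : β * a = b := by rw [hβ]; field_simp
  have hc : γ * a = c := by rw [hγ]; field_simp
  refine ⟨(u : ℂ) * z, ?_⟩
  simp only [map_mul, Complex.conj_ofReal]
  linear_combination (a * (u:ℂ)) * hμeq - a * huC - (a * (u:ℂ)^2) * hz1
    - ((u:ℂ) * (starRingEnd ℂ) z) * hb - ((u:ℂ) * z) * hc

/-- Every traceless 2×2 complex matrix can be "zerodiagonalized" by a unitary conjugation:
there is a unitary `U` such that both diagonal entries of `U M Uᴴ` vanish. -/
theorem exists_unitary_zerodiagonalize_two (M : Matrix (Fin 2) (Fin 2) ℂ)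
    (hM : M.trace = 0) :
    ∃ U ∈ Matrix.unitaryGroup (Fin 2) ℂ,
      ∀ i : Fin 2, (U * M * Uᴴ) i i = 0 := by
  by_cases ha : M 0 0 = 0
  · exact zd_key M hM 1 0 (by simp) (by simp [ha])
  · obtain ⟨t, ht⟩ := zd_t (M 0 0) (M 0 1) (M 1 0) ha
    set n := Complex.normSq t with hn
    have h0 : 0 ≤ n := hn ▸ Complex.normSq_nonneg t
    have hpos : (0 : ℝ) < 1 + n := by linarith
    set s := Real.sqrt (1 + n) with hs
    have hs2 : s ^ 2 = 1 + n := Real.sq_sqrt hpos.le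
    have hsne : s ≠ 0 := by
      intro h; rw [h] at hs2; nlinarith [Complex.normSq_nonneg t]
    have htt : t * (starRingEnd ℂ) t = (n : ℂ) := by
      rw [Complex.mul_conj, hn]
    have hx2 : ((s⁻¹ : ℝ) : ℂ) ^ 2 * (1 + (n : ℂ)) = 1 := by
      have : ((s : ℝ) : ℂ) ≠ 0 := by exact_mod_cast hsne
      have h2 : ((s : ℝ) : ℂ) ^ 2 = 1 + (n : ℂ) := by exact_mod_cast hs2
      push_cast
      rw [← h2]
      field_simp
    refine zd_key M hM ((s⁻¹ : ℝ) : ℂ) (((s⁻¹ : ℝ) : ℂ) * t) ?_ ?_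
    · simp only [map_mul, Complex.conj_ofReal]
      linear_combination hx2 + ((s⁻¹:ℝ):ℂ) ^ 2 * htt
    · simp only [map_mul, Complex.conj_ofReal]
      linear_combination (((s⁻¹:ℝ):ℂ) ^ 2) * ht
end

section
/- Let M be an n×n complex matrix and let i, j be distinct indices in Fin n. Then there exists an n×n unitary matrix U such that (1) U agrees with the identity matrix in every entry (p, q) with p ∉ {i, j} or q ∉ {i, j}; (2) the conjugated matrix M' = U * M * Uᴴ satisfies M' i i = M' j j; and (3) M' p p = M p p for every p ∉ {i, j}. In particular M' i i + M' j j = M i i + M j j. -/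
open scoped Matrix

private lemma key_scalar (a b c₀ d : ℂ) :
    ∃ t : ℂ, (1 - (Complex.normSq t : ℂ)) * (a - d)
      + 2 * (t * c₀ + (starRingEnd ℂ) t * b) = 0 := by
  by_cases had : a = d
  · exact ⟨0, by simp [had]⟩
  set K := starRingEnd ℂ with hK
  set z : ℂ := c₀ * K (a - d) - K (b * K (a - d)) with hz
  set ε : ℂ := if z = 0 then 1 else K z / (‖z‖ : ℂ) with hε
  have hzz : K z * z = (‖z‖ : ℂ) * (‖z‖ : ℂ) := by
    rw [mul_comm, Complex.mul_conj]
    norm_cast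
    rw [Complex.normSq_eq_norm_sq]
    ring
  have hε1 : ε * K ε = 1 := by
    by_cases h0 : z = 0
    · simp [hε, h0]
    · have hn : (‖z‖ : ℂ) ≠ 0 := by simpa using norm_ne_zero_iff.mpr h0
      simp only [hε, if_neg h0, map_div₀, hK, Complex.conj_conj, Complex.conj_ofReal]
      rw [div_mul_div_comm]
      rw [show (starRingEnd ℂ) z * z = (‖z‖ : ℂ) * (‖z‖ : ℂ) from hzz]
      exact div_self (mul_ne_zero hn hn)
  have himz : (ε * z).im = 0 := by
    by_cases h0 : z = 0
    · simp [h0]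
    · simp only [hε, if_neg h0]
      rw [div_mul_eq_mul_div]
      rw [show K z * z = (‖z‖ : ℂ) * (‖z‖ : ℂ) from hzz]
      rw [← Complex.ofReal_mul, ← Complex.ofReal_div, Complex.ofReal_im]
  set w : ℂ := K ε * b + ε * c₀ with hw
  have hμ : (w * K (a - d)).im = 0 := by
    have hexp : w * K (a - d)
        = ε * z + (ε * (K b * (a - d)) + K (ε * (K b * (a - d)))) := by
      simp only [hw, hz, hK, map_sub, map_mul, Complex.conj_conj]
      ring
    rw [hexp]
    simp only [Complex.add_im, hK, Complex.conj_im, himz]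
    ring
  set lam : ℝ := (w * K (a - d)).re / Complex.normSq (a - d) with hlam
  have hsub : a - d ≠ 0 := sub_ne_zero.mpr had
  have hns : Complex.normSq (a - d) ≠ 0 := (Complex.normSq_pos.mpr hsub).ne'
  have h1 : w * K (a - d) = (((w * K (a - d)).re : ℝ) : ℂ) := by
    apply Complex.ext
    · simp
    · simp only [Complex.ofReal_im]
      exact hμ
  have h2 : (a - d) * K (a - d) = (Complex.normSq (a - d) : ℂ) := Complex.mul_conj _
  have h3 : w * (Complex.normSq (a - d) : ℂ) = (((w * K (a - d)).re : ℝ) : ℂ) * (a - d) := by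
    rw [← h2]
    linear_combination (a - d) * h1
  have hweq : w = (lam : ℂ) * (a - d) := by
    rw [hlam]
    push_cast
    rw [div_mul_eq_mul_div, eq_div_iff (Complex.ofReal_ne_zero.mpr hns)]
    linear_combination h3
  set r : ℝ := lam + Real.sqrt (lam ^ 2 + 1) with hr
  have hrr : r ^ 2 = 2 * lam * r + 1 := by
    have h := Real.sq_sqrt (by positivity : (0:ℝ) ≤ lam ^ 2 + 1)
    rw [hr]
    nlinarith [h]
  refine ⟨(r : ℂ) * ε, ?_⟩
  have hKt : K ((r : ℂ) * ε) = (r : ℂ) * K ε := by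
    rw [map_mul]
    rw [show K ((r:ℝ):ℂ) = ((r:ℝ):ℂ) from Complex.conj_ofReal r]
  have hnt : (Complex.normSq ((r : ℂ) * ε) : ℂ) = (r : ℂ) ^ 2 := by
    rw [← Complex.mul_conj, hKt]
    linear_combination (r:ℂ)^2 * hε1
  rw [hnt, hKt]
  have hrrC : ((r:ℂ)) ^ 2 = 2 * (lam : ℂ) * (r:ℂ) + 1 := by exact_mod_cast hrr
  have hweq' : K ε * b + ε * c₀ = (lam : ℂ) * (a - d) := by rw [← hw]; exact hweq
  linear_combination 2 * (r:ℂ) * hweq' + (d - a) * hrrC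


private lemma sum_pair_support {n : ℕ} {i j : Fin n} (hij : i ≠ j) {f : Fin n → ℂ}
    (hf : ∀ r, r ≠ i → r ≠ j → f r = 0) : ∑ r, f r = f i + f j := by
  classical
  have h : ∑ r ∈ ({i, j} : Finset (Fin n)), f r = ∑ r, f r := by
    refine Finset.sum_subset (Finset.subset_univ _) (fun x _ hx => ?_)
    simp only [Finset.mem_insert, Finset.mem_singleton] at hx
    push_neg at hx
    exact hf x hx.1 hx.2
  rw [← h, Finset.sum_pair hij]

private lemma sum_single_support {n : ℕ} {p : Fin n} {f : Fin n → ℂ}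
    (hf : ∀ r, r ≠ p → f r = 0) : ∑ r, f r = f p :=
  Finset.sum_eq_single p (fun r _ hr => hf r hr) (fun h => absurd (Finset.mem_univ p) h)

private lemma embed_twoLevel (n : ℕ) (M : Matrix (Fin n) (Fin n) ℂ) (i j : Fin n) (hij : i ≠ j)
    (α β γ δ : ℂ)
    (h11 : α * star α + β * star β = 1)
    (h12 : α * star γ + β * star δ = 0)
    (h21 : γ * star α + δ * star β = 0)
    (h22 : γ * star γ + δ * star δ = 1) :
    ∃ U ∈ Matrix.unitaryGroup (Fin n) ℂ,
      (∀ p q : Fin n, p ∉ ({i, j} : Set (Fin n)) ∨ q ∉ ({i, j} : Set (Fin n)) →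
        U p q = (1 : Matrix (Fin n) (Fin n) ℂ) p q) ∧
      (U * M * Uᴴ) i i = (α * M i i + β * M j i) * star α + (α * M i j + β * M j j) * star β ∧
      (U * M * Uᴴ) j j = (γ * M i i + δ * M j i) * star γ + (γ * M i j + δ * M j j) * star δ ∧
      (∀ p : Fin n, p ∉ ({i, j} : Set (Fin n)) → (U * M * Uᴴ) p p = M p p) := by
  classical
  set U : Matrix (Fin n) (Fin n) ℂ := fun p q =>
    if p = i then (if q = i then α else if q = j then β else 0)
    else if p = j then (if q = i then γ else if q = j then δ else 0)
    else if p = q then 1 else 0 with hU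
  have hji : j ≠ i := hij.symm
  have hUii : U i i = α := by simp [hU]
  have hUij : U i j = β := by simp [hU, hji]
  have hUji : U j i = γ := by simp [hU, hij, hji]
  have hUjj : U j j = δ := by simp [hU, hij, hji]
  have hUi0 : ∀ q, q ≠ i → q ≠ j → U i q = 0 := by intro q h1 h2; simp [hU, h1, h2]
  have hUj0 : ∀ q, q ≠ i → q ≠ j → U j q = 0 := by intro q h1 h2; simp [hU, hij, hji, h1, h2]
  have hUrow : ∀ p q, p ≠ i → p ≠ j → U p q = if p = q then 1 else 0 := by
    intro p q h1 h2; simp [hU, h1, h2]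
  -- unitarity
  have hUU : U * Uᴴ = 1 := by
    ext p q
    rw [Matrix.mul_apply]
    simp only [Matrix.conjTranspose_apply]
    by_cases hpi : p = i
    · rw [hpi]
      rw [sum_pair_support hij (f := fun r => U i r * star (U q r))
        (fun r h1 h2 => by show U i r * star (U q r) = 0; rw [hUi0 r h1 h2, zero_mul])]
      show U i i * star (U q i) + U i j * star (U q j) = _
      by_cases hqi : q = i
      · rw [hqi, hUii, hUij, Matrix.one_apply_eq]; exact h11
      · by_cases hqj : q = j
        · rw [hqj, hUii, hUij, hUji, hUjj, Matrix.one_apply_ne hij]; exact h12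
        · rw [hUii, hUij, hUrow q i hqi hqj, hUrow q j hqi hqj, if_neg hqi, if_neg hqj,
            Matrix.one_apply_ne (fun h => hqi h.symm)]
          simp
    · by_cases hpj : p = j
      · rw [hpj]
        rw [sum_pair_support hij (f := fun r => U j r * star (U q r))
          (fun r h1 h2 => by show U j r * star (U q r) = 0; rw [hUj0 r h1 h2, zero_mul])]
        show U j i * star (U q i) + U j j * star (U q j) = _
        by_cases hqi : q = i
        · rw [hqi, hUji, hUjj, hUii, hUij, Matrix.one_apply_ne hji]; exact h21
        · by_cases hqj : q = j
          · rw [hqj, hUji, hUjj, Matrix.one_apply_eq]; exact h22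
          · rw [hUji, hUjj, hUrow q i hqi hqj, hUrow q j hqi hqj, if_neg hqi, if_neg hqj,
              Matrix.one_apply_ne (fun h => hqj h.symm)]
            simp
      · rw [sum_single_support (p := p) (f := fun r => U p r * star (U q r))
          (fun r hr => by
            show U p r * star (U q r) = 0
            rw [hUrow p r hpi hpj, if_neg (fun h => hr h.symm), zero_mul])]
        show U p p * star (U q p) = _
        rw [hUrow p p hpi hpj, if_pos rfl, one_mul]
        by_cases hqi : q = i
        · rw [hqi, hUi0 p hpi hpj, Matrix.one_apply_ne hpi]; simp
        · by_cases hqj : q = j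
          · rw [hqj, hUj0 p hpi hpj, Matrix.one_apply_ne hpj]; simp
          · rw [hUrow q p hqi hqj, Matrix.one_apply]
            by_cases hpq : p = q
            · rw [if_pos (hpq ▸ rfl : q = p), if_pos hpq]; simp
            · rw [if_neg (fun h => hpq h.symm), if_neg hpq]; simp
  have hUmem : U ∈ Matrix.unitaryGroup (Fin n) ℂ := by
    rw [Matrix.mem_unitaryGroup_iff]
    exact hUU
  -- entries of N = U * M
  have hNi : ∀ q, (U * M) i q = α * M i q + β * M j q := by
    intro q
    rw [Matrix.mul_apply,
      sum_pair_support hij (f := fun r => U i r * M r q)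
        (fun r h1 h2 => by show U i r * M r q = 0; rw [hUi0 r h1 h2, zero_mul])]
    show U i i * M i q + U i j * M j q = _
    rw [hUii, hUij]
  have hNj : ∀ q, (U * M) j q = γ * M i q + δ * M j q := by
    intro q
    rw [Matrix.mul_apply,
      sum_pair_support hij (f := fun r => U j r * M r q)
        (fun r h1 h2 => by show U j r * M r q = 0; rw [hUj0 r h1 h2, zero_mul])]
    show U j i * M i q + U j j * M j q = _
    rw [hUji, hUjj]
  have hNp : ∀ p q, p ≠ i → p ≠ j → (U * M) p q = M p q := by
    intro p q h1 h2
    rw [Matrix.mul_apply,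
      sum_single_support (p := p) (f := fun r => U p r * M r q)
        (fun r hr => by
          show U p r * M r q = 0
          rw [hUrow p r h1 h2, if_neg (fun h => hr h.symm), zero_mul])]
    show U p p * M p q = _
    rw [hUrow p p h1 h2, if_pos rfl, one_mul]
  -- diagonal entries of U * M * Uᴴ
  have hTi : (U * M * Uᴴ) i i = (U * M) i i * star α + (U * M) i j * star β := by
    rw [Matrix.mul_apply]
    simp only [Matrix.conjTranspose_apply]
    rw [sum_pair_support hij (f := fun s => (U * M) i s * star (U i s))
      (fun s h1 h2 => by
        show (U * M) i s * star (U i s) = 0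
        rw [hUi0 s h1 h2, star_zero, mul_zero])]
    show (U * M) i i * star (U i i) + (U * M) i j * star (U i j) = _
    rw [hUii, hUij]
  have hTj : (U * M * Uᴴ) j j = (U * M) j i * star γ + (U * M) j j * star δ := by
    rw [Matrix.mul_apply]
    simp only [Matrix.conjTranspose_apply]
    rw [sum_pair_support hij (f := fun s => (U * M) j s * star (U j s))
      (fun s h1 h2 => by
        show (U * M) j s * star (U j s) = 0
        rw [hUj0 s h1 h2, star_zero, mul_zero])]
    show (U * M) j i * star (U j i) + (U * M) j j * star (U j j) = _
    rw [hUji, hUjj]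
  have hTp : ∀ p, p ≠ i → p ≠ j → (U * M * Uᴴ) p p = M p p := by
    intro p h1 h2
    rw [Matrix.mul_apply]
    simp only [Matrix.conjTranspose_apply]
    rw [sum_single_support (p := p) (f := fun s => (U * M) p s * star (U p s))
      (fun s hs => by
        show (U * M) p s * star (U p s) = 0
        rw [hUrow p s h1 h2, if_neg (fun h => hs h.symm), star_zero, mul_zero])]
    show (U * M) p p * star (U p p) = _
    rw [hUrow p p h1 h2, if_pos rfl, star_one, mul_one, hNp p p h1 h2]
  refine ⟨U, hUmem, ?_, ?_, ?_, ?_⟩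
  · intro p q hpq
    rcases hpq with hp | hq
    · simp only [Set.mem_insert_iff, Set.mem_singleton_iff] at hp
      push_neg at hp
      rw [hUrow p q hp.1 hp.2, Matrix.one_apply]
    · simp only [Set.mem_insert_iff, Set.mem_singleton_iff] at hq
      push_neg at hq
      by_cases hpi : p = i
      · rw [hpi, hUi0 q hq.1 hq.2, Matrix.one_apply_ne (fun h => hq.1 h.symm)]
      · by_cases hpj : p = j
        · rw [hpj, hUj0 q hq.1 hq.2, Matrix.one_apply_ne (fun h => hq.2 h.symm)]
        · rw [hUrow p q hpi hpj, Matrix.one_apply]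
  · rw [hTi, hNi i, hNi j]
  · rw [hTj, hNj i, hNj j]
  · intro p hp
    simp only [Set.mem_insert_iff, Set.mem_singleton_iff] at hp
    push_neg at hp
    exact hTp p hp.1 hp.2

/-- The elementary pairwise-equalization step: for any `n×n` complex matrix `M` and distinct
indices `i ≠ j` there is a two-level unitary `U`, acting only on coordinates `i` and `j`
(i.e. agreeing with the identity in every entry `(p,q)` with `p ∉ {i,j}` or `q ∉ {i,j}`),
such that `M' = U M Uᴴ` has `M' i i = M' j j` while the other diagonal entries are
unchanged. -/
theorem exists_twoLevel_unitary_equalize_pair (n : ℕ)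
    (M : Matrix (Fin n) (Fin n) ℂ) (i j : Fin n) (hij : i ≠ j) :
    ∃ U ∈ Matrix.unitaryGroup (Fin n) ℂ,
      (∀ p q : Fin n, p ∉ ({i, j} : Set (Fin n)) ∨ q ∉ ({i, j} : Set (Fin n)) →
        U p q = (1 : Matrix (Fin n) (Fin n) ℂ) p q) ∧
      (U * M * Uᴴ) i i = (U * M * Uᴴ) j j ∧
      (∀ p : Fin n, p ∉ ({i, j} : Set (Fin n)) → (U * M * Uᴴ) p p = M p p) := by
  obtain ⟨t, ht⟩ := key_scalar (M i i) (M i j) (M j i) (M j j)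
  set K := starRingEnd ℂ with hK
  set c : ℝ := (Real.sqrt (1 + Complex.normSq t))⁻¹ with hcdef
  have hX : (0:ℝ) < 1 + Complex.normSq t := by
    have := Complex.normSq_nonneg t
    linarith
  have hs : Real.sqrt (1 + Complex.normSq t) ^ 2 = 1 + Complex.normSq t := Real.sq_sqrt hX.le
  have hc2 : c ^ 2 = (1 + Complex.normSq t)⁻¹ := by rw [hcdef, inv_pow, hs]
  have hcR : c ^ 2 * (1 + Complex.normSq t) = 1 := by
    rw [hc2, inv_mul_cancel₀ hX.ne']
  have hcC : ((c:ℝ):ℂ) ^ 2 * (1 + (Complex.normSq t : ℂ)) = 1 := by exact_mod_cast hcR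
  have hmc : t * K t = (Complex.normSq t : ℂ) := Complex.mul_conj t
  have h11 : (c:ℂ) * star ((c:ℂ)) + ((c:ℂ) * t) * star ((c:ℂ) * t) = 1 := by
    simp only [Complex.star_def, map_mul, map_neg, Complex.conj_ofReal, Complex.conj_conj]
    linear_combination hcC + ((c:ℝ):ℂ) ^ 2 * hmc
  have h12 : (c:ℂ) * star (-((c:ℂ) * K t)) + ((c:ℂ) * t) * star ((c:ℂ)) = 0 := by
    simp only [hK, Complex.star_def, map_mul, map_neg, Complex.conj_ofReal, Complex.conj_conj]
    ring
  have h21 : (-((c:ℂ) * K t)) * star ((c:ℂ)) + (c:ℂ) * star ((c:ℂ) * t) = 0 := by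
    simp only [hK, Complex.star_def, map_mul, map_neg, Complex.conj_ofReal, Complex.conj_conj]
    ring
  have h22 : (-((c:ℂ) * K t)) * star (-((c:ℂ) * K t)) + (c:ℂ) * star ((c:ℂ)) = 1 := by
    simp only [hK, Complex.star_def, map_mul, map_neg, Complex.conj_ofReal, Complex.conj_conj]
    linear_combination hcC + ((c:ℝ):ℂ) ^ 2 * hmc
  obtain ⟨U, hUmem, hid, hTii, hTjj, hTpp⟩ :=
    embed_twoLevel n M i j hij ((c:ℝ):ℂ) ((c:ℂ) * t) (-((c:ℂ) * K t)) ((c:ℝ):ℂ)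
      h11 h12 h21 h22
  refine ⟨U, hUmem, hid, ?_, hTpp⟩
  rw [hTii, hTjj]
  simp only [hK, Complex.star_def, map_mul, map_neg, Complex.conj_ofReal, Complex.conj_conj]
  have ht' : (1 - (Complex.normSq t : ℂ)) * (M i i - M j j)
      + 2 * (t * M j i + (starRingEnd ℂ) t * M i j) = 0 := ht
  linear_combination ((c:ℝ):ℂ) ^ 2 * ht'
    - ((c:ℝ):ℂ) ^ 2 * (M i i - M j j) * (Complex.mul_conj t)
end

section
/- Let k be a natural number and let M be a (2^k)×(2^k) complex matrix. Then there exists a (2^k)×(2^k) unitary matrix U such that every diagonal entry of U * M * Uᴴ equals (trace M) / 2^k. -/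
open scoped Matrix

open Matrix Complex

lemma real_ratio {w z : ℂ} (hz : z ≠ 0) (him : (w * (starRingEnd ℂ) z).im = 0) :
    ∃ s : ℝ, w = (s : ℂ) * z := by
  refine ⟨(w * (starRingEnd ℂ) z).re / Complex.normSq z, ?_⟩
  have h1 : w * (starRingEnd ℂ) z = (((w * (starRingEnd ℂ) z).re : ℝ) : ℂ) := by
    rw [Complex.ext_iff]; simp [him]
  have hn : (Complex.normSq z : ℂ) ≠ 0 := by
    exact_mod_cast (Complex.normSq_pos.mpr hz).ne'
  rw [Complex.ofReal_div, div_mul_eq_mul_div, eq_div_iff hn, ← Complex.mul_conj]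
  linear_combination z * h1

lemma exists_unit (b c z : ℂ) (hz : z ≠ 0) :
    ∃ ζ : ℂ, ζ * (starRingEnd ℂ) ζ = 1 ∧
      ∃ s : ℝ, (starRingEnd ℂ) ζ * b + ζ * c = (s : ℂ) * z := by
  set p := b * (starRingEnd ℂ) z with hp
  set q := c * (starRingEnd ℂ) z with hq
  by_cases h : p = (starRingEnd ℂ) q
  · refine ⟨1, by simp, ?_⟩
    apply real_ratio hz
    have h2 : ((starRingEnd ℂ) 1 * b + 1 * c) * (starRingEnd ℂ) z = p + q := by
      rw [hp, hq, RingHom.map_one]; ring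
    rw [h2, h]
    simp
  · have hne : p - (starRingEnd ℂ) q ≠ 0 := sub_ne_zero.mpr h
    set m : ℝ := ‖p - (starRingEnd ℂ) q‖ with hm
    have hmne : (m : ℂ) ≠ 0 := by
      simpa [hm] using (norm_ne_zero_iff.mpr hne)
    refine ⟨(p - (starRingEnd ℂ) q) / m, ?_, ?_⟩
    · rw [Complex.mul_conj]
      have : Complex.normSq ((p - (starRingEnd ℂ) q) / m) = 1 := by
        rw [Complex.normSq_div, Complex.normSq_ofReal, ← Complex.sq_norm, ← hm]
        have : m ≠ 0 := by exact_mod_cast hmne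
        field_simp
      rw [this]; simp
    · apply real_ratio hz
      have key : ((starRingEnd ℂ) ((p - (starRingEnd ℂ) q) / m) * b
          + ((p - (starRingEnd ℂ) q) / m) * c) * (starRingEnd ℂ) z
          = ((Complex.normSq p : ℂ) - (Complex.normSq q : ℂ)) / m := by
        rw [map_div₀]
        simp only [map_sub, Complex.conj_conj, Complex.conj_ofReal]
        rw [← Complex.mul_conj, ← Complex.mul_conj]
        field_simp
        rw [hp, hq]; ring
      rw [key, ← Complex.ofReal_sub, ← Complex.ofReal_div]
      simp

lemma two_by_two (A : Matrix (Fin 2) (Fin 2) ℂ) :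
    ∃ u ∈ Matrix.unitaryGroup (Fin 2) ℂ,
      (u * A * uᴴ) 0 0 = (u * A * uᴴ) 1 1 := by
  by_cases hd : A 0 0 = A 1 1
  · exact ⟨1, one_mem _, by simpa using hd⟩
  · obtain ⟨ζ, hζ, s, hw⟩ :=
      exists_unit (A 0 1) (A 1 0) (A 0 0 - A 1 1) (sub_ne_zero.mpr hd)
    set r : ℝ := Real.sqrt (1 + s ^ 2) with hrdef
    have hr2 : r ^ 2 = 1 + s ^ 2 := Real.sq_sqrt (by positivity)
    have hrpos : 0 < r := Real.sqrt_pos.mpr (by positivity)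
    set c2 : ℝ := -s / r with hc2def
    have hc2sq : c2 ^ 2 = s ^ 2 / r ^ 2 := by rw [hc2def, div_pow, neg_sq]
    have habs : c2 ^ 2 ≤ 1 := by
      rw [hc2sq, div_le_one (by positivity)]
      nlinarith [hr2]
    have h1c : 0 ≤ (1 + c2) / 2 := by nlinarith
    have h1c' : 0 ≤ (1 - c2) / 2 := by nlinarith
    set C : ℝ := Real.sqrt ((1 + c2) / 2) with hCdef
    set S : ℝ := Real.sqrt ((1 - c2) / 2) with hSdef
    have hC2 : C ^ 2 = (1 + c2) / 2 := Real.sq_sqrt h1c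
    have hS2 : S ^ 2 = (1 - c2) / 2 := Real.sq_sqrt h1c'
    have hCS : 2 * C * S = 1 / r := by
      have : C * S = Real.sqrt ((1 + c2) / 2 * ((1 - c2) / 2)) :=
        (Real.sqrt_mul h1c _).symm
      have h6 : (1:ℝ) - s ^ 2 / r ^ 2 = 1 / r ^ 2 := by
        field_simp; linarith [hr2]
      have h4 : (1 + c2) / 2 * ((1 - c2) / 2) = (1 / (2 * r)) ^ 2 := by
        calc (1 + c2) / 2 * ((1 - c2) / 2) = (1 - c2 ^ 2) / 4 := by ring
          _ = (1 - s ^ 2 / r ^ 2) / 4 := by rw [hc2sq]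
          _ = (1 / r ^ 2) / 4 := by rw [h6]
          _ = (1 / (2 * r)) ^ 2 := by ring
      rw [h4, Real.sqrt_sq (by positivity)] at this
      rw [mul_assoc, this]; field_simp
    have hpyth : C ^ 2 + S ^ 2 = 1 := by rw [hC2, hS2]; ring
    have hkeyR : (C ^ 2 - S ^ 2) + s * (2 * C * S) = 0 := by
      rw [hC2, hS2, hCS, hc2def]; field_simp; ring
    have hkey : ((C : ℂ) ^ 2 - (S : ℂ) ^ 2) + (s : ℂ) * (2 * C * S) = 0 := by
      exact_mod_cast congrArg (Complex.ofReal) hkeyR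
    have hpythC : (C : ℂ) ^ 2 + (S : ℂ) ^ 2 = 1 := by
      exact_mod_cast congrArg (Complex.ofReal) hpyth
    set u : Matrix (Fin 2) (Fin 2) ℂ :=
      !![(C : ℂ), (S : ℂ) * ζ; -((S : ℂ) * (starRingEnd ℂ) ζ), (C : ℂ)] with hu
    have hunit : u ∈ Matrix.unitaryGroup (Fin 2) ℂ := by
      rw [Matrix.mem_unitaryGroup_iff]
      ext i j
      rw [Matrix.star_eq_conjTranspose]
      fin_cases i <;> fin_cases j <;>
        simp [hu, Matrix.mul_apply, Fin.sum_univ_two, Matrix.conjTranspose_apply,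
          Complex.conj_ofReal, Matrix.one_apply] <;>
        first
          | ring1
          | linear_combination (S:ℂ)^2 * hζ + hpythC
    refine ⟨u, hunit, ?_⟩
    simp only [Matrix.mul_apply, Fin.sum_univ_two, Matrix.conjTranspose_apply, hu]
    simp [Complex.conj_ofReal]
    linear_combination (A 0 0 - A 1 1) * hkey + 2 * (C:ℂ) * (S:ℂ) * hw +
      ((S:ℂ)^2 * (A 1 1 - A 0 0)) * hζ

lemma submatrix_mem_unitaryGroup {m l : Type*} [Fintype m] [DecidableEq m]
    [Fintype l] [DecidableEq l] (e : l ≃ m) {W : Matrix m m ℂ}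
    (hW : W ∈ Matrix.unitaryGroup m ℂ) :
    W.submatrix e e ∈ Matrix.unitaryGroup l ℂ := by
  rw [Matrix.mem_unitaryGroup_iff] at hW ⊢
  rw [Matrix.star_eq_conjTranspose] at hW ⊢
  rw [Matrix.conjTranspose_submatrix, Matrix.submatrix_mul_equiv, hW,
    Matrix.submatrix_one_equiv]

lemma trace_submatrix_equiv {m l : Type*} [Fintype m] [Fintype l] (e : l ≃ m)
    (M : Matrix m m ℂ) : (M.submatrix e e).trace = M.trace := by
  simp only [Matrix.trace, Matrix.diag, Matrix.submatrix_apply]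
  exact Equiv.sum_comp e (fun i => M i i)

lemma step {n : ℕ}
    (two : ∀ A : Matrix (Fin 2) (Fin 2) ℂ, ∃ u ∈ Matrix.unitaryGroup (Fin 2) ℂ,
      (u * A * uᴴ) 0 0 = (u * A * uᴴ) 1 1)
    (ih : ∀ A : Matrix (Fin n) (Fin n) ℂ, ∃ V ∈ Matrix.unitaryGroup (Fin n) ℂ,
      ∀ j, (V * A * Vᴴ) j j = A.trace / (n : ℂ))
    (M : Matrix (Fin 2 × Fin n) (Fin 2 × Fin n) ℂ) :
    ∃ U ∈ Matrix.unitaryGroup (Fin 2 × Fin n) ℂ,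
      ∀ p, (U * M * Uᴴ) p p = M.trace / (2 * (n : ℂ)) := by
  choose u hu hequal using fun j : Fin n =>
    two (Matrix.of fun a b => M (a, j) (b, j))
  set U1 : Matrix (Fin 2 × Fin n) (Fin 2 × Fin n) ℂ := Matrix.blockDiagonal u with hU1def
  have hU1 : U1 ∈ Matrix.unitaryGroup (Fin 2 × Fin n) ℂ := by
    have h1 : (fun k => u k * (u k)ᴴ) = (1 : Fin n → Matrix (Fin 2) (Fin 2) ℂ) := by
      funext j
      simpa [Matrix.star_eq_conjTranspose] using Matrix.mem_unitaryGroup_iff.mp (hu j)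
    rw [Matrix.mem_unitaryGroup_iff, Matrix.star_eq_conjTranspose, hU1def,
      Matrix.blockDiagonal_conjTranspose, ← Matrix.blockDiagonal_mul, h1,
      Matrix.blockDiagonal_one]
  set N : Matrix (Fin 2 × Fin n) (Fin 2 × Fin n) ℂ := U1 * M * U1ᴴ with hNdef
  have key1 : ∀ (a b : Fin 2) (j : Fin n),
      N (a, j) (b, j) = (u j * (Matrix.of fun a b => M (a, j) (b, j)) * (u j)ᴴ) a b := by
    intro a b j
    rw [hNdef, hU1def]
    simp only [Matrix.mul_apply, Matrix.conjTranspose_apply, Matrix.blockDiagonal_apply,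
      Fintype.sum_prod_type, Matrix.of_apply]
    simp [ite_mul, mul_ite, apply_ite (starRingEnd ℂ), Finset.sum_ite_eq, Finset.sum_ite_eq']
  have hNd : ∀ j : Fin n, N (0, j) (0, j) = N (1, j) (1, j) := by
    intro j
    rw [key1 0 0 j, key1 1 1 j]
    exact hequal j
  set A : Fin 2 → Matrix (Fin n) (Fin n) ℂ :=
    fun a => Matrix.of fun j j' => N (a, j) (a, j') with hAdef
  choose V hV hVdiag using fun a : Fin 2 => ih (A a)
  set e : (Fin 2 × Fin n) ≃ (Fin n × Fin 2) := Equiv.prodComm (Fin 2) (Fin n) with hedef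
  set U2 : Matrix (Fin 2 × Fin n) (Fin 2 × Fin n) ℂ :=
    (Matrix.blockDiagonal V).submatrix e e with hU2def
  have hU2 : U2 ∈ Matrix.unitaryGroup (Fin 2 × Fin n) ℂ := by
    apply submatrix_mem_unitaryGroup
    have h1 : (fun k => V k * (V k)ᴴ) = (1 : Fin 2 → Matrix (Fin n) (Fin n) ℂ) := by
      funext a
      simpa [Matrix.star_eq_conjTranspose] using Matrix.mem_unitaryGroup_iff.mp (hV a)
    rw [Matrix.mem_unitaryGroup_iff, Matrix.star_eq_conjTranspose,
      Matrix.blockDiagonal_conjTranspose, ← Matrix.blockDiagonal_mul, h1,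
      Matrix.blockDiagonal_one]
  have key2 : ∀ (a : Fin 2) (j : Fin n),
      (U2 * N * U2ᴴ) (a, j) (a, j) = (V a * A a * (V a)ᴴ) j j := by
    intro a j
    rw [hU2def]
    simp only [Matrix.mul_apply, Matrix.conjTranspose_apply, Matrix.submatrix_apply,
      Matrix.blockDiagonal_apply, Fintype.sum_prod_type, Matrix.of_apply, hAdef,
      hedef, Equiv.prodComm_apply, Prod.swap_prod_mk, Prod.fst, Prod.snd]
    simp [ite_mul, mul_ite, apply_ite (starRingEnd ℂ), Finset.sum_ite_eq, Finset.sum_ite_eq']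
  -- traces
  have htrN : N.trace = M.trace := by
    rw [hNdef, Matrix.trace_mul_cycle]
    have := (Matrix.mem_unitaryGroup_iff'.mp hU1)
    rw [Matrix.star_eq_conjTranspose] at this
    rw [this, one_mul]
  have htrA : ∀ a : Fin 2, (A a).trace = ∑ j : Fin n, N (a, j) (a, j) := by
    intro a
    simp [hAdef, Matrix.trace, Matrix.diag]
  have htrsum : (A 0).trace + (A 1).trace = M.trace := by
    rw [htrA, htrA, ← htrN, hNdef]
    rw [← hNdef, Matrix.trace]
    simp only [Matrix.diag, Fintype.sum_prod_type, Fin.sum_univ_two]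
  have htrA' : ∀ a : Fin 2, (A a).trace = M.trace / 2 := by
    have h01 : (A 0).trace = (A 1).trace := by
      rw [htrA, htrA]
      exact Finset.sum_congr rfl fun j _ => hNd j
    have h0 : (A 0).trace = M.trace / 2 := by
      rw [eq_div_iff (by norm_num : (2:ℂ) ≠ 0)]
      linear_combination htrsum + h01
    intro a
    fin_cases a
    · exact h0
    · exact h01 ▸ h0
  refine ⟨U2 * U1, mul_mem hU2 hU1, ?_⟩
  rintro ⟨a, j⟩
  have hrw : U2 * U1 * M * (U2 * U1)ᴴ = U2 * N * U2ᴴ := by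
    rw [Matrix.conjTranspose_mul, hNdef]
    simp only [Matrix.mul_assoc]
  rw [hrw, key2 a j, hVdiag a j, htrA' a, div_div]

/-- The `2^k`-dimensional equidiagonalization result: every `2^k × 2^k` complex matrix `M`
can be conjugated by a unitary so that every diagonal entry equals `trace M / 2^k`. -/
theorem exists_unitary_equidiagonalize_pow_two (k : ℕ)
    (M : Matrix (Fin (2 ^ k)) (Fin (2 ^ k)) ℂ) :
    ∃ U ∈ Matrix.unitaryGroup (Fin (2 ^ k)) ℂ,
      ∀ i : Fin (2 ^ k), (U * M * Uᴴ) i i = M.trace / (2 ^ k : ℂ) := by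
  induction k with
  | zero =>
    refine ⟨1, one_mem _, ?_⟩
    intro i
    rw [Matrix.conjTranspose_one, mul_one, one_mul]
    have hji : ∀ j : Fin (2 ^ 0), j = i := fun j => Fin.ext (by omega)
    have htr : M.trace = M i i := by
      rw [Matrix.trace]
      rw [Finset.sum_congr rfl fun j _ => by rw [Matrix.diag_apply, hji j]]
      simp [hji 0]
    rw [htr]
    norm_num
  | succ k ih =>
    set e : Fin 2 × Fin (2 ^ k) ≃ Fin (2 ^ (k + 1)) :=
      finProdFinEquiv.trans (finCongr (by rw [pow_succ]; ring)) with hedef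
    have ih' : ∀ A : Matrix (Fin (2 ^ k)) (Fin (2 ^ k)) ℂ,
        ∃ V ∈ Matrix.unitaryGroup (Fin (2 ^ k)) ℂ,
          ∀ j, (V * A * Vᴴ) j j = A.trace / ((2 ^ k : ℕ) : ℂ) := by
      intro A
      obtain ⟨V, hV, h⟩ := ih A
      exact ⟨V, hV, fun j => by rw [h j]; norm_cast⟩
    obtain ⟨U', hU', hdiag⟩ := step two_by_two ih' (M.submatrix e e)
    refine ⟨U'.submatrix e.symm e.symm, submatrix_mem_unitaryGroup e.symm hU', ?_⟩
    intro i
    have hM : (M.submatrix e e).submatrix e.symm e.symm = M := by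
      ext i j; simp
    have hrw : U'.submatrix ⇑e.symm ⇑e.symm * M * (U'.submatrix ⇑e.symm ⇑e.symm)ᴴ
        = (U' * M.submatrix ⇑e ⇑e * U'ᴴ).submatrix ⇑e.symm ⇑e.symm := by
      conv_lhs => rw [← hM]
      rw [Matrix.conjTranspose_submatrix, Matrix.submatrix_mul_equiv,
        Matrix.submatrix_mul_equiv]
    rw [hrw, Matrix.submatrix_apply, hdiag, trace_submatrix_equiv]
    congr 1
    push_cast [pow_succ]
    ring
end

section
/- Let n ≥ 1 and let M be an n×n complex matrix with trace M = 0. Let k be a natural number with n ≤ 2^k, and let M₀ be the (2^k)×(2^k) complex matrix whose top-left n×n block is M and whose remaining entries are all zero. Then there exists a (2^k)×(2^k) unitary matrix U such that every diagonal entry of U * M₀ * Uᴴ is zero. -/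
open scoped Matrix

open Complex

private lemma exists_unit_dir (u w : ℝ) :
    ∃ e : ℂ, (starRingEnd ℂ) e * e = 1 ∧ u * e.im + w * e.re = 0 := by
  by_cases h : u = 0 ∧ w = 0
  · exact ⟨1, by simp, by simp [h.1, h.2]⟩
  · have hm : (0:ℝ) < Real.sqrt (u^2 + w^2) := by
      apply Real.sqrt_pos.mpr
      rcases not_and_or.mp h with h' | h' <;> positivity
    set m := Real.sqrt (u^2 + w^2) with hmdef
    have hm2 : m^2 = u^2 + w^2 := Real.sq_sqrt (by positivity)
    refine ⟨⟨u/m, -w/m⟩, ?_, ?_⟩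
    · have : ((starRingEnd ℂ) ⟨u/m, -w/m⟩ * ⟨u/m, -w/m⟩) = ⟨(u/m)^2 + (w/m)^2, 0⟩ := by
        simp [Complex.ext_iff, Complex.mul_re, Complex.mul_im]
        constructor <;> ring
      rw [this]
      rw [Complex.ext_iff]
      simp
      field_simp
      linarith [hm2]
    · simp only [Complex.ofReal_div]
      show u * (-w/m) + w * (u/m) = 0
      field_simp
      ring

private lemma core2 (p q r : ℂ) :
    ∃ x y : ℂ, (starRingEnd ℂ) x * x + (starRingEnd ℂ) y * y = 1 ∧
      (starRingEnd ℂ) x * x * p + (starRingEnd ℂ) x * y * q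
        + x * (starRingEnd ℂ) y * r - (starRingEnd ℂ) y * y * p = 0 := by
  by_cases hp : p = 0
  · exact ⟨0, 1, by simp, by simp [hp]⟩
  · set a := q / p with ha
    set b := r / p with hb
    obtain ⟨e, he1, he2⟩ := exists_unit_dir (a.re - b.re) (a.im + b.im)
    -- a*e + b*conj e is real
    set z := a * e + b * (starRingEnd ℂ) e with hz
    have hzim : z.im = 0 := by
      simp only [hz, Complex.add_im, Complex.mul_im, Complex.conj_re, Complex.conj_im]
      nlinarith [he2]
    have hzre : z = (z.re : ℂ) := by
      rw [Complex.ext_iff]; simp [hzim]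
    set cr := z.re with hcr
    set s := (cr + Real.sqrt (cr^2 + 4)) / 2 with hs
    have hsq : Real.sqrt (cr^2+4) ^ 2 = cr^2 + 4 := Real.sq_sqrt (by positivity)
    have hseq : s^2 = cr * s + 1 := by
      rw [hs]; nlinarith [hsq]
    set t := (s : ℂ) * e with ht
    have hd : (0:ℝ) < Real.sqrt (1 + s^2) := Real.sqrt_pos.mpr (by positivity)
    have hd2 : (Real.sqrt (1 + s^2))^2 = 1 + s^2 := Real.sq_sqrt (by positivity)
    set d := Real.sqrt (1 + s^2) with hddef
    refine ⟨(d⁻¹ : ℝ), (d⁻¹ : ℝ) * t, ?_, ?_⟩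
    · have htt : (starRingEnd ℂ) t * t = (s:ℂ)^2 := by
        rw [ht]; push_cast
        simp only [map_mul, Complex.conj_ofReal]
        calc (s:ℂ) * (starRingEnd ℂ) e * ((s:ℂ) * e)
            = (s:ℂ)^2 * ((starRingEnd ℂ) e * e) := by ring
          _ = (s:ℂ)^2 := by rw [he1]; ring
      simp only [map_mul, Complex.conj_ofReal]
      have : ((d⁻¹ : ℝ):ℂ) * ((d⁻¹:ℝ):ℂ) * ((1:ℂ) + (s:ℂ)^2) = 1 := by
        have hdc : ((d:ℝ):ℂ) ≠ 0 := by
          simp [Complex.ofReal_ne_zero]; exact ne_of_gt hd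
        push_cast
        field_simp
        norm_cast
        nlinarith [hd2]
      calc ((d⁻¹:ℝ):ℂ) * ((d⁻¹:ℝ):ℂ) + ((d⁻¹:ℝ):ℂ) * (starRingEnd ℂ) t * (((d⁻¹:ℝ):ℂ) * t)
          = ((d⁻¹:ℝ):ℂ) * ((d⁻¹:ℝ):ℂ) * (1 + (starRingEnd ℂ) t * t) := by ring
        _ = 1 := by rw [htt]; exact this
    · have hq : q = p * a := by
        rw [ha, mul_div_assoc', mul_comm, mul_div_assoc, div_self hp, mul_one]
      have hr : r = p * b := by
        rw [hb, mul_div_assoc', mul_comm, mul_div_assoc, div_self hp, mul_one]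
      have key : (1:ℂ) + t * a + (starRingEnd ℂ) t * b - (starRingEnd ℂ) t * t = 0 := by
        have htc : (starRingEnd ℂ) t = (s:ℂ) * (starRingEnd ℂ) e := by
          rw [ht]; simp [map_mul, Complex.conj_ofReal]
        have h1 : t * a + (starRingEnd ℂ) t * b = (s:ℂ) * z := by
          rw [ht, htc, hz]; ring
        have h2 : (starRingEnd ℂ) t * t = (s:ℂ)^2 := by
          rw [ht, htc]
          calc (s:ℂ) * (starRingEnd ℂ) e * ((s:ℂ) * e)
              = (s:ℂ)^2 * ((starRingEnd ℂ) e * e) := by ring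
            _ = (s:ℂ)^2 := by rw [he1]; ring
        have hseqC : ((s:ℝ):ℂ)^2 = ((cr:ℝ):ℂ) * ((s:ℝ):ℂ) + 1 := by
          have := congrArg (fun x : ℝ => (x:ℂ)) hseq
          push_cast at this
          exact_mod_cast this
        linear_combination h1 - h2 + (s:ℂ) * hzre - hseqC
      simp only [map_mul, Complex.conj_ofReal]
      linear_combination (((d⁻¹:ℝ):ℂ) * ((d⁻¹:ℝ):ℂ) * p) * key
        + (((d⁻¹:ℝ):ℂ) * ((d⁻¹:ℝ):ℂ) * t) * hq
        + (((d⁻¹:ℝ):ℂ) * ((d⁻¹:ℝ):ℂ) * (starRingEnd ℂ) t) * hr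

open Matrix

private def ZD {m : Type} [Fintype m] [DecidableEq m] (A : Matrix m m ℂ) : Prop :=
  ∃ U ∈ Matrix.unitaryGroup m ℂ, ∀ i, (U * A * Uᴴ) i i = 0

private lemma zd_of_conj {m : Type} [Fintype m] [DecidableEq m]
    {A W : Matrix m m ℂ} (hW : W ∈ Matrix.unitaryGroup m ℂ)
    (h : ZD (W * A * Wᴴ)) : ZD A := by
  obtain ⟨U, hU, hdiag⟩ := h
  refine ⟨U * W, mul_mem hU hW, fun i => ?_⟩
  have : U * W * A * (U * W)ᴴ = U * (W * A * Wᴴ) * Uᴴ := by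
    rw [conjTranspose_mul]
    simp only [Matrix.mul_assoc]
  rw [this]; exact hdiag i

private lemma zd_reindex {l m : Type} [Fintype l] [DecidableEq l] [Fintype m] [DecidableEq m]
    (e : l ≃ m) {A : Matrix m m ℂ} (h : ZD (A.submatrix e e)) : ZD A := by
  obtain ⟨U, hU, hdiag⟩ := h
  refine ⟨U.submatrix e.symm e.symm, ?_, fun i => ?_⟩
  · rw [Matrix.mem_unitaryGroup_iff]
    have : star (U.submatrix e.symm e.symm) = (star U).submatrix e.symm e.symm := by
      simp [Matrix.star_eq_conjTranspose, Matrix.conjTranspose_submatrix]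
    rw [this, Matrix.submatrix_mul_equiv, (Matrix.mem_unitaryGroup_iff.mp hU : U * star U = 1),
      Matrix.submatrix_one_equiv]
  · have hA : A = (A.submatrix e e).submatrix e.symm e.symm := by
      simp [Matrix.submatrix_submatrix]
    have : U.submatrix e.symm e.symm * A * (U.submatrix e.symm e.symm)ᴴ
        = (U * A.submatrix e e * Uᴴ).submatrix e.symm e.symm := by
      rw [Matrix.conjTranspose_submatrix, hA]
      rw [Matrix.submatrix_mul_equiv, Matrix.submatrix_mul_equiv, ← hA]
    rw [this]
    exact hdiag (e.symm i)

private lemma trace_fromBlocks_eq {m : Type} [Fintype m]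
    (A : Matrix m m ℂ) (B C : Matrix m m ℂ) (D : Matrix m m ℂ) :
    (Matrix.fromBlocks A B C D).trace = A.trace + D.trace := by
  simp [Matrix.trace, Matrix.diag, Fintype.sum_sum_type]

private lemma trace_conj_unitary {m : Type} [Fintype m] [DecidableEq m]
    {W : Matrix m m ℂ} (hW : W ∈ Matrix.unitaryGroup m ℂ) (B : Matrix m m ℂ) :
    (W * B * Wᴴ).trace = B.trace := by
  rw [Matrix.trace_mul_cycle, ← Matrix.star_eq_conjTranspose,
    (Matrix.mem_unitaryGroup_iff'.mp hW : star W * W = 1), Matrix.one_mul]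

private lemma zd_blockdiag {m : Type} [Fintype m] [DecidableEq m]
    {P S : Matrix m m ℂ} (hP : ZD P) (hS : ZD S)
    (Q R : Matrix m m ℂ) : ZD (fromBlocks P Q R S) := by
  obtain ⟨U₁, hU₁, h₁⟩ := hP
  obtain ⟨U₂, hU₂, h₂⟩ := hS
  refine ⟨fromBlocks U₁ 0 0 U₂, ?_, ?_⟩
  · rw [Matrix.mem_unitaryGroup_iff, Matrix.star_eq_conjTranspose,
      Matrix.fromBlocks_conjTranspose, Matrix.fromBlocks_multiply, ← Matrix.fromBlocks_one,
      Matrix.fromBlocks_inj]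
    have e₁ : U₁ * U₁ᴴ = 1 := by
      have := Matrix.mem_unitaryGroup_iff.mp hU₁; rwa [Matrix.star_eq_conjTranspose] at this
    have e₂ : U₂ * U₂ᴴ = 1 := by
      have := Matrix.mem_unitaryGroup_iff.mp hU₂; rwa [Matrix.star_eq_conjTranspose] at this
    refine ⟨by simpa using e₁, by simp, by simp, by simpa using e₂⟩
  · have : fromBlocks U₁ 0 0 U₂ * fromBlocks P Q R S * (fromBlocks U₁ 0 0 U₂)ᴴ
        = fromBlocks (U₁ * P * U₁ᴴ) (U₁ * Q * U₂ᴴ) (U₂ * R * U₁ᴴ) (U₂ * S * U₂ᴴ) := by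
      rw [Matrix.fromBlocks_conjTranspose, Matrix.fromBlocks_multiply,
        Matrix.fromBlocks_multiply]
      simp
    rw [this]
    rintro (i | i)
    · simpa using h₁ i
    · simpa using h₂ i

private lemma zd_sum_step {m : Type} [Fintype m] [DecidableEq m]
    (ih : ∀ A : Matrix m m ℂ, A.trace = 0 → ZD A)
    (B : Matrix (m ⊕ m) (m ⊕ m) ℂ) (hB : B.trace = 0) : ZD B := by
  obtain ⟨x, y, h1, h2⟩ := core2 B.toBlocks₁₁.trace B.toBlocks₁₂.trace B.toBlocks₂₁.trace
  set W : Matrix (m ⊕ m) (m ⊕ m) ℂ :=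
    fromBlocks ((starRingEnd ℂ) x • (1 : Matrix m m ℂ)) ((starRingEnd ℂ) y • 1)
      (-(y • 1)) (x • 1) with hWdef
  have hWu : W ∈ Matrix.unitaryGroup (m ⊕ m) ℂ := by
    rw [hWdef, Matrix.mem_unitaryGroup_iff, Matrix.star_eq_conjTranspose,
      Matrix.fromBlocks_conjTranspose, Matrix.fromBlocks_multiply, ← Matrix.fromBlocks_one]
    rw [Matrix.fromBlocks_inj]
    refine ⟨?_, ?_, ?_, ?_⟩ <;>
      simp [Matrix.smul_mul, Matrix.mul_smul, smul_smul, ← add_smul, mul_comm] <;>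
      (try rw [show x * (starRingEnd ℂ) x + y * (starRingEnd ℂ) y = 1 by linear_combination h1,
        one_smul]) <;>
      (try rw [show y * (starRingEnd ℂ) y + x * (starRingEnd ℂ) x = 1 by linear_combination h1,
        one_smul])
  refine zd_of_conj hWu ?_
  have hmul : W * B * Wᴴ = fromBlocks
      (x • ((starRingEnd ℂ) x • B.toBlocks₁₁ + (starRingEnd ℂ) y • B.toBlocks₂₁)
        + y • ((starRingEnd ℂ) x • B.toBlocks₁₂ + (starRingEnd ℂ) y • B.toBlocks₂₂))
      (-((starRingEnd ℂ) y • ((starRingEnd ℂ) x • B.toBlocks₁₁ + (starRingEnd ℂ) y • B.toBlocks₂₁))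
        + (starRingEnd ℂ) x • ((starRingEnd ℂ) x • B.toBlocks₁₂
          + (starRingEnd ℂ) y • B.toBlocks₂₂))
      (x • (-(y • B.toBlocks₁₁) + x • B.toBlocks₂₁)
        + y • (-(y • B.toBlocks₁₂) + x • B.toBlocks₂₂))
      (-((starRingEnd ℂ) y • (-(y • B.toBlocks₁₁) + x • B.toBlocks₂₁))
        + (starRingEnd ℂ) x • (-(y • B.toBlocks₁₂) + x • B.toBlocks₂₂)) := by
    conv_lhs => rw [show B = fromBlocks B.toBlocks₁₁ B.toBlocks₁₂ B.toBlocks₂₁ B.toBlocks₂₂ from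
      (fromBlocks_toBlocks B).symm]
    rw [hWdef, Matrix.fromBlocks_conjTranspose, Matrix.fromBlocks_multiply,
      Matrix.fromBlocks_multiply, Matrix.fromBlocks_inj]
    refine ⟨?_, ?_, ?_, ?_⟩ <;> simp [Matrix.smul_mul, Matrix.mul_smul]
  have htraceB : B.toBlocks₁₁.trace + B.toBlocks₂₂.trace = 0 := by
    rw [← trace_fromBlocks_eq B.toBlocks₁₁ B.toBlocks₁₂ B.toBlocks₂₁ B.toBlocks₂₂,
      fromBlocks_toBlocks]
    exact hB
  have hP' : (x • ((starRingEnd ℂ) x • B.toBlocks₁₁ + (starRingEnd ℂ) y • B.toBlocks₂₁)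
        + y • ((starRingEnd ℂ) x • B.toBlocks₁₂ + (starRingEnd ℂ) y • B.toBlocks₂₂)).trace
      = 0 := by
    simp only [Matrix.trace_add, Matrix.trace_smul, smul_eq_mul]
    linear_combination h2 + ((starRingEnd ℂ) y * y) * htraceB
  have hS' : (-((starRingEnd ℂ) y • (-(y • B.toBlocks₁₁) + x • B.toBlocks₂₁))
        + (starRingEnd ℂ) x • (-(y • B.toBlocks₁₂) + x • B.toBlocks₂₂)).trace = 0 := by
    have htr : (W * B * Wᴴ).trace = 0 := by rw [trace_conj_unitary hWu]; exact hB
    rw [hmul, trace_fromBlocks_eq] at htr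
    rw [← htr, hP', zero_add]
  rw [hmul]
  exact zd_blockdiag (ih _ hP') (ih _ hS') _ _

private lemma zd_pow (k : ℕ) :
    ∀ A : Matrix (Fin (2 ^ k)) (Fin (2 ^ k)) ℂ, A.trace = 0 → ZD A := by
  induction k with
  | zero =>
    intro A hA
    refine ⟨1, one_mem _, fun i => ?_⟩
    have hi : i = ⟨0, by norm_num⟩ := by
      apply Fin.ext
      have := i.isLt
      omega
    have hA0 : A ⟨0, by norm_num⟩ ⟨0, by norm_num⟩ = 0 := by
      have : A.trace = A ⟨0, by norm_num⟩ ⟨0, by norm_num⟩ := by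
        rw [Matrix.trace]
        rw [show (Finset.univ : Finset (Fin (2^0))) = {⟨0, by norm_num⟩} from rfl]
        simp [Matrix.diag]
      rw [hA] at this
      exact this.symm
    rw [Matrix.conjTranspose_one, Matrix.mul_one, Matrix.one_mul, hi]
    exact hA0
  | succ k ih =>
    intro A hA
    have hcard : 2 ^ (k + 1) = 2 ^ k + 2 ^ k := by ring
    set e : Fin (2 ^ k) ⊕ Fin (2 ^ k) ≃ Fin (2 ^ (k + 1)) :=
      finSumFinEquiv.trans (finCongr hcard.symm) with he
    refine zd_reindex e ?_
    refine zd_sum_step ih _ ?_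
    show (A.submatrix e e).trace = 0
    rw [← hA, Matrix.trace, Matrix.trace]
    exact Fintype.sum_equiv e _ _ (fun i => rfl)

/-- General-case zerodiagonalization: if `M` is a traceless `n×n` complex matrix (`n ≥ 1`)
and `M₀` is the `2^k × 2^k` matrix (`n ≤ 2^k`) whose top-left `n×n` block is `M` and whose
remaining entries vanish, then some unitary conjugate of `M₀` has all diagonal entries
zero. -/
theorem exists_unitary_zerodiagonalize_padded (n : ℕ) (hn : 1 ≤ n)
    (M : Matrix (Fin n) (Fin n) ℂ) (hM : M.trace = 0)
    (k : ℕ) (hk : n ≤ 2 ^ k)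
    (M₀ : Matrix (Fin (2 ^ k)) (Fin (2 ^ k)) ℂ)
    (hM₀ : ∀ i j : Fin (2 ^ k),
      M₀ i j = if h : (i : ℕ) < n ∧ (j : ℕ) < n then M ⟨i, h.1⟩ ⟨j, h.2⟩ else 0) :
    ∃ U ∈ Matrix.unitaryGroup (Fin (2 ^ k)) ℂ,
      ∀ i : Fin (2 ^ k), (U * M₀ * Uᴴ) i i = 0 := by
  have htr : M₀.trace = 0 := by
    set f : ℕ → ℂ := fun i => if h : i < n then M ⟨i, h⟩ ⟨i, h⟩ else 0 with hf
    have h1 : M₀.trace = ∑ i : Fin (2 ^ k), f i := by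
      rw [Matrix.trace]
      refine Finset.sum_congr rfl fun i _ => ?_
      rw [Matrix.diag, hM₀, hf]
      by_cases h : (i : ℕ) < n
      · rw [dif_pos ⟨h, h⟩]; simp [h]
      · rw [dif_neg (by tauto)]; simp [h]
    have h2 : M.trace = ∑ i : Fin n, f i := by
      rw [Matrix.trace]
      refine Finset.sum_congr rfl fun i _ => ?_
      rw [Matrix.diag, hf]
      simp [i.isLt]
    rw [h1, Fin.sum_univ_eq_sum_range f, ← Finset.sum_subset
      (Finset.range_subset_range.mpr hk) (fun i _ hi => by
        simp only [Finset.mem_range, not_lt] at hi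
        simp [hf, Nat.not_lt.mpr hi]),
      ← Fin.sum_univ_eq_sum_range f, ← h2, hM]
  exact zd_pow k M₀ htr
end

section
/- Let F and G be n×m complex matrices (n ≥ 1) with trace (F * Gᴴ) = 0. Then there exist a natural number k with n ≤ 2^k, and a (2^k)×(2^k) unitary matrix U, such that, writing F₀ and G₀ for the (2^k)×m matrices obtained from F and G by appending zero rows, the matrix (U * F₀) * (U * G₀)ᴴ has all diagonal entries equal to zero; equivalently, for every index i in Fin (2^k), Σ_j (U * F₀) i j · conj ((U * G₀) i j) = 0. -/
open scoped Matrix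

namespace HornAux

noncomputable section

open Complex Finset

variable {N : ℕ}

lemma expand (B : Matrix (Fin N) (Fin N) ℂ) (v w : Fin N → ℂ) (a b : ℂ) :
    star (a • v + b • w) ⬝ᵥ B *ᵥ (a • v + b • w) =
      starRingEnd ℂ a * a * (star v ⬝ᵥ B *ᵥ v) + starRingEnd ℂ a * b * (star v ⬝ᵥ B *ᵥ w)
      + starRingEnd ℂ b * a * (star w ⬝ᵥ B *ᵥ v) + starRingEnd ℂ b * b * (star w ⬝ᵥ B *ᵥ w) := by
  simp only [star_add, star_smul, Matrix.mulVec_add, Matrix.mulVec_smul,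
    add_dotProduct, smul_dotProduct, dotProduct_add,
    dotProduct_smul, smul_eq_mul, star_trivial, RCLike.star_def]
  ring


lemma ext_on {n : ℕ} (v : Fin (n+1) → ℂ) (hv : star v ⬝ᵥ v = 1) :
    ∃ P : Matrix (Fin (n+1)) (Fin (n+1)) ℂ, P * Pᴴ = 1 ∧ ∀ j, P 0 j = starRingEnd ℂ (v j) := by
  classical
  set vE : EuclideanSpace ℂ (Fin (n+1)) := (WithLp.equiv 2 (Fin (n+1) → ℂ)).symm v with hvE
  have hcard : Module.finrank ℂ (EuclideanSpace ℂ (Fin (n+1))) = Fintype.card (Fin (n+1)) := by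
    simp
  have horth : Orthonormal ℂ (Set.restrict {(0 : Fin (n+1))} (fun _ => vE)) := by
    rw [orthonormal_iff_ite]
    intro i j
    have : i = j := Subsingleton.elim i j
    subst this
    rw [if_pos rfl]
    change inner ℂ vE vE = 1
    simp only [hvE, PiLp.inner_apply, RCLike.inner_apply]
    simpa [dotProduct, mul_comm] using hv
  obtain ⟨b, hb⟩ := horth.exists_orthonormalBasis_extension_of_card_eq hcard
  have hb0 : b 0 = vE := hb 0 rfl
  refine ⟨Matrix.of fun i a => starRingEnd ℂ (b i a), ?_, ?_⟩
  · ext i j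
    have h2 := (orthonormal_iff_ite.mp b.orthonormal) i j
    simp only [PiLp.inner_apply, RCLike.inner_apply] at h2
    simp only [Matrix.mul_apply, Matrix.conjTranspose_apply, Matrix.of_apply, star_def,
      RingHom.map_mul, RingHomCompTriple.comp_apply, RingHom.id_apply]
    rw [Matrix.one_apply]
    rw [← h2]
    exact Finset.sum_congr rfl fun _ _ => mul_comm _ _
  · intro j
    simp only [Matrix.of_apply, hb0]
    rfl

lemma exists_phase (s : ℂ) : ∃ μ : ℂ, starRingEnd ℂ μ * μ = 1 ∧ (μ * s).re = 0 := by
  rcases eq_or_ne s 0 with h | h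
  · exact ⟨1, by simp, by simp [h]⟩
  · have habs : ((‖s‖ : ℝ) : ℂ) ≠ 0 := by
      simpa using (norm_ne_zero_iff.mpr h)
    refine ⟨Complex.I * (starRingEnd ℂ s / ↑(‖s‖)), ?_, ?_⟩
    · rw [map_mul, map_div₀]
      simp only [Complex.conj_I, Complex.conj_conj, Complex.conj_ofReal]
      field_simp
      have h2 : s * starRingEnd ℂ s = ((‖s‖ : ℝ) : ℂ) * ((‖s‖ : ℝ) : ℂ) := by
        rw [Complex.mul_conj]
        norm_cast
        rw [Complex.normSq_eq_norm_sq, sq]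
      linear_combination (-(s * starRingEnd ℂ s)) * Complex.I_mul_I + h2
    · have : Complex.I * (starRingEnd ℂ s / ↑(‖s‖)) * s
          = Complex.I * ((Complex.normSq s / ‖s‖ : ℝ) : ℂ) := by
        push_cast
        field_simp
        linear_combination Complex.mul_conj s
      rw [this]
      simp

lemma combo (A : Matrix (Fin N) (Fin N) ℂ) (v w : Fin N → ℂ)
    (hv : star v ⬝ᵥ v = 1) (hw : star w ⬝ᵥ w = 1)
    (hvw : star v ⬝ᵥ w = 0) (hwv : star w ⬝ᵥ v = 0) :
    ∃ r : ℝ, ∀ t : ℝ, 0 ≤ t → t ≤ 1 → ∃ u : Fin N → ℂ,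
      star u ⬝ᵥ u = 1 ∧
      star u ⬝ᵥ A *ᵥ u = ((1-t : ℝ) : ℂ) * (star v ⬝ᵥ A *ᵥ v) + ((t : ℝ) : ℂ)
        * (star w ⬝ᵥ A *ᵥ w) + ((Real.sqrt (t*(1-t)) * r : ℝ) : ℂ) * Complex.I := by
  classical
  set c : ℂ := star v ⬝ᵥ A *ᵥ w with hc
  set c' : ℂ := star w ⬝ᵥ A *ᵥ v with hc'
  obtain ⟨μ, hμμ, hμs⟩ := exists_phase (c + starRingEnd ℂ c')
  set z : ℂ := μ * c + starRingEnd ℂ μ * c' with hz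
  have hzre : z.re = 0 := by
    have h1 : (starRingEnd ℂ μ * c').re = (μ * starRingEnd ℂ c').re := by
      rw [← Complex.conj_re (μ * starRingEnd ℂ c')]
      simp [map_mul]
    rw [hz, Complex.add_re, h1, ← Complex.add_re, ← mul_add]
    exact hμs
  have hzr : z = ((z.im : ℝ) : ℂ) * Complex.I := by
    apply Complex.ext <;> simp [hzre]
  refine ⟨z.im, fun t ht ht1 => ?_⟩
  have h1t : (0:ℝ) ≤ 1 - t := by linarith
  set α : ℂ := ((Real.sqrt (1-t) : ℝ) : ℂ) with hα
  set β : ℂ := ((Real.sqrt t : ℝ) : ℂ) * μ with hβ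
  have hαα : starRingEnd ℂ α * α = ((1-t:ℝ):ℂ) := by
    rw [hα, Complex.conj_ofReal, ← Complex.ofReal_mul, Real.mul_self_sqrt h1t]
  have hββ : starRingEnd ℂ β * β = ((t:ℝ):ℂ) := by
    rw [hβ, map_mul, Complex.conj_ofReal]
    have h3 : ((Real.sqrt t : ℝ):ℂ) * starRingEnd ℂ μ * (((Real.sqrt t : ℝ):ℂ) * μ)
        = (((Real.sqrt t : ℝ):ℂ) * ((Real.sqrt t : ℝ):ℂ)) * (starRingEnd ℂ μ * μ) := by ring
    rw [h3, hμμ, ← Complex.ofReal_mul, Real.mul_self_sqrt ht, mul_one]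
  have hcross : starRingEnd ℂ α * β * c + starRingEnd ℂ β * α * c'
      = ((Real.sqrt (t*(1-t)) * z.im : ℝ) : ℂ) * Complex.I := by
    rw [hα, hβ, map_mul, Complex.conj_ofReal, Complex.conj_ofReal]
    have h4 : ((Real.sqrt (1-t):ℝ):ℂ) * (((Real.sqrt t:ℝ):ℂ) * μ) * c
        + ((Real.sqrt t:ℝ):ℂ) * starRingEnd ℂ μ * ((Real.sqrt (1-t):ℝ):ℂ) * c'
        = (((Real.sqrt t:ℝ):ℂ) * ((Real.sqrt (1-t):ℝ):ℂ)) * z := by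
      rw [hz]; ring
    rw [h4, ← Complex.ofReal_mul, ← Real.sqrt_mul ht, hzr]
    push_cast
    simp only [Complex.mul_I_im, Complex.ofReal_re]
    ring
  refine ⟨α • v + β • w, ?_, ?_⟩
  · have h5 := expand (1 : Matrix (Fin N) (Fin N) ℂ) v w α β
    simp only [Matrix.one_mulVec] at h5
    rw [h5, hv, hw, hvw, hwv, hαα, hββ]
    push_cast; ring
  · rw [expand A v w α β, ← hc, ← hc', hαα, hββ]
    linear_combination hcross

lemma horn_generic {M : Type*} [AddCommGroup M] (f : ℂ →+ M)
    (hiso : ∀ (m : ℕ) (A : Matrix (Fin (m+1)) (Fin (m+1)) ℂ), f A.trace = 0 →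
      ∃ v, star v ⬝ᵥ v = 1 ∧ f (star v ⬝ᵥ A *ᵥ v) = 0) :
    ∀ (n : ℕ) (A : Matrix (Fin n) (Fin n) ℂ), f A.trace = 0 →
      ∃ U : Matrix (Fin n) (Fin n) ℂ, U * Uᴴ = 1 ∧ ∀ i, f ((U * A * Uᴴ) i i) = 0 := by
  intro n
  induction n with
  | zero => exact fun A hA => ⟨1, by simp, fun i => i.elim0⟩
  | succ n ih =>
    intro A hA
    obtain ⟨v, hv1, hv0⟩ := hiso n A hA
    obtain ⟨P, hP, hP0⟩ := ext_on v hv1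
    have hPP : Pᴴ * P = 1 := mul_eq_one_comm.mp hP
    set B := P * A * Pᴴ with hB
    have hB00 : B 0 0 = star v ⬝ᵥ A *ᵥ v := by
      simp only [hB, Matrix.mul_apply, Matrix.conjTranspose_apply, hP0, Complex.conj_conj,
        dotProduct, Matrix.mulVec, Pi.star_apply, RCLike.star_def, Finset.sum_mul,
        Finset.mul_sum]
      rw [Finset.sum_comm]
      exact Finset.sum_congr rfl fun a _ => Finset.sum_congr rfl fun e _ => by ring
    have htrB : B.trace = A.trace := by
      rw [hB, Matrix.trace_mul_cycle, hPP, Matrix.one_mul]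
    set A' : Matrix (Fin n) (Fin n) ℂ := Matrix.of fun i j => B i.succ j.succ with hA'
    have hsum : B.trace = B 0 0 + A'.trace := by
      simp only [Matrix.trace, Matrix.diag, Fin.sum_univ_succ, hA', Matrix.of_apply]
    have htrA' : f A'.trace = 0 := by
      have h6 : f (B 0 0 + A'.trace) = 0 := by rw [← hsum, htrB]; exact hA
      rw [map_add, hB00, hv0, zero_add] at h6
      exact h6
    obtain ⟨U', hU', hU'0⟩ := ih A' htrA'
    set E : Matrix (Fin (n+1)) (Fin (n+1)) ℂ :=
      Matrix.of (Fin.cons (fun j => if j = (0 : Fin (n+1)) then (1:ℂ) else 0) (fun i' => Fin.cons 0 (U' i'))) with hE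
    have hE0 : ∀ a, E 0 a = if a = 0 then (1:ℂ) else 0 := by
      intro a; simp [hE, Fin.cons_zero]
    have hEs0 : ∀ i', E (Fin.succ i') 0 = 0 := by
      intro i'; simp [hE, Fin.cons_succ, Fin.cons_zero]
    have hEss : ∀ i' j', E (Fin.succ i') (Fin.succ j') = U' i' j' := by
      intro i' j'; simp [hE, Fin.cons_succ]
    have hEE : E * Eᴴ = 1 := by
      ext i j
      rw [Matrix.mul_apply]
      simp only [Matrix.conjTranspose_apply, RCLike.star_def]
      induction i using Fin.cases with
      | zero =>
        induction j using Fin.cases with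
        | zero =>
          rw [Fin.sum_univ_succ]
          simp [hE0, Fin.succ_ne_zero]
        | succ j' =>
          rw [Fin.sum_univ_succ]
          simp [hE0, hEs0, hEss, Fin.succ_ne_zero, Matrix.one_apply,
            (Fin.succ_ne_zero j').symm]
      | succ i' =>
        induction j using Fin.cases with
        | zero =>
          rw [Fin.sum_univ_succ]
          simp [hE0, hEs0, hEss, Fin.succ_ne_zero, Matrix.one_apply]
        | succ j' =>
          rw [Fin.sum_univ_succ]
          have h7 := congrFun (congrFun hU' i') j'
          rw [Matrix.mul_apply] at h7
          simp only [Matrix.conjTranspose_apply, RCLike.star_def] at h7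
          simp [hEs0, hEss, Matrix.one_apply, Fin.succ_inj, h7]
    have hD0 : (E * B * Eᴴ) 0 0 = B 0 0 := by
      simp only [Matrix.mul_apply, Matrix.conjTranspose_apply, RCLike.star_def, hE0,
        ite_mul, one_mul, zero_mul, mul_ite, mul_one, mul_zero]
      simp
    have hDs : ∀ i', (E * B * Eᴴ) (Fin.succ i') (Fin.succ i') = (U' * A' * U'ᴴ) i' i' := by
      intro i'
      simp only [Matrix.mul_apply, Matrix.conjTranspose_apply, RCLike.star_def]
      rw [Fin.sum_univ_succ]
      simp only [hEs0, hEss, map_zero, mul_zero, zero_add, zero_mul]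
      refine Finset.sum_congr rfl fun e' _ => ?_
      rw [Fin.sum_univ_succ]
      simp only [hEs0, hEss, zero_mul, zero_add, hA', Matrix.of_apply]
    refine ⟨E * P, ?_, ?_⟩
    · rw [Matrix.conjTranspose_mul, Matrix.mul_assoc, ← Matrix.mul_assoc P, hP,
        Matrix.one_mul, hEE]
    · have hconj : E * P * A * (E * P)ᴴ = E * B * Eᴴ := by
        rw [Matrix.conjTranspose_mul, hB]
        simp only [Matrix.mul_assoc]
      intro i
      rw [hconj]
      induction i using Fin.cases with
      | zero => rw [hD0, hB00]; exact hv0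
      | succ i' => rw [hDs i']; exact hU'0 i'
lemma basis_unit (i : Fin N) :
    star (fun a => if a = i then (1:ℂ) else 0) ⬝ᵥ (fun a => if a = i then (1:ℂ) else 0) = 1 := by
  simp [dotProduct, Pi.star_apply, apply_ite, Finset.sum_ite_eq']

lemma basis_orth {i j : Fin N} (h : i ≠ j) :
    star (fun a => if a = i then (1:ℂ) else 0) ⬝ᵥ (fun a => if a = j then (1:ℂ) else 0) = 0 := by
  simp only [dotProduct, Pi.star_apply, apply_ite, star_one, star_zero]
  rw [Finset.sum_eq_zero]
  intro a _
  by_cases ha : a = i <;> by_cases hb : a = j <;> simp_all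

lemma basis_quad (A : Matrix (Fin N) (Fin N) ℂ) (i : Fin N) :
    star (fun a => if a = i then (1:ℂ) else 0) ⬝ᵥ A *ᵥ (fun a => if a = i then (1:ℂ) else 0)
      = A i i := by
  simp [dotProduct, Matrix.mulVec, Pi.star_apply, apply_ite, mul_ite,
    Finset.sum_ite_eq', Finset.mul_sum]

lemma re_iso : ∀ (m : ℕ) (A : Matrix (Fin (m+1)) (Fin (m+1)) ℂ), Complex.reAddGroupHom A.trace = 0 →
    ∃ v, star v ⬝ᵥ v = 1 ∧ Complex.reAddGroupHom (star v ⬝ᵥ A *ᵥ v) = 0 := by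
  intro m A hA
  simp only [Complex.reAddGroupHom, AddMonoidHom.coe_mk, ZeroHom.coe_mk] at hA ⊢
  set d : Fin (m+1) → ℝ := fun i => (A i i).re with hd
  have hsum : ∑ i, d i = 0 := by
    have : A.trace.re = ∑ i, (A i i).re := by
      rw [Matrix.trace]
      exact Complex.re_sum _ _
    rw [← this]; exact hA
  obtain ⟨i₀, -, hmax⟩ := Finset.exists_max_image Finset.univ d ⟨0, Finset.mem_univ 0⟩
  obtain ⟨i₁, -, hmin⟩ := Finset.exists_min_image Finset.univ d ⟨0, Finset.mem_univ 0⟩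
  have hle0 : d i₁ ≤ 0 := by
    by_contra hpos
    push_neg at hpos
    have h1 : ∑ _i : Fin (m+1), d i₁ ≤ ∑ i, d i :=
      Finset.sum_le_sum fun i _ => hmin i (Finset.mem_univ i)
    rw [Finset.sum_const, hsum] at h1
    simp only [Finset.card_univ, Fintype.card_fin, nsmul_eq_mul] at h1
    have hcast : (0:ℝ) < ((m+1 : ℕ) : ℝ) := by positivity
    nlinarith [h1, mul_pos hcast hpos]
  have hge0 : 0 ≤ d i₀ := by
    by_contra hneg
    push_neg at hneg
    have h1 : ∑ i, d i ≤ ∑ _i : Fin (m+1), d i₀ :=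
      Finset.sum_le_sum fun i _ => hmax i (Finset.mem_univ i)
    rw [Finset.sum_const, hsum] at h1
    simp only [Finset.card_univ, Fintype.card_fin, nsmul_eq_mul] at h1
    have hcast : (0:ℝ) < ((m+1 : ℕ) : ℝ) := by positivity
    nlinarith [h1, mul_pos hcast (neg_pos.mpr hneg)]
  by_cases h₀ : d i₀ = 0
  · exact ⟨_, basis_unit i₀, by rw [basis_quad]; exact h₀⟩
  by_cases h₁ : d i₁ = 0
  · exact ⟨_, basis_unit i₁, by rw [basis_quad]; exact h₁⟩
  have hpos : 0 < d i₀ := lt_of_le_of_ne hge0 (Ne.symm h₀)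
  have hneg : d i₁ < 0 := lt_of_le_of_ne hle0 h₁
  have hne : i₀ ≠ i₁ := fun h => by rw [h] at hpos; linarith
  obtain ⟨r, hr⟩ := combo A _ _ (basis_unit i₀) (basis_unit i₁) (basis_orth hne)
    (basis_orth hne.symm)
  set t : ℝ := d i₀ / (d i₀ - d i₁) with ht
  have hden : 0 < d i₀ - d i₁ := by linarith
  have ht0 : 0 ≤ t := div_nonneg hpos.le hden.le
  have ht1 : t ≤ 1 := by
    rw [ht, div_le_one hden]; linarith
  obtain ⟨u, hu1, hu2⟩ := hr t ht0 ht1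
  refine ⟨u, hu1, ?_⟩
  rw [hu2, basis_quad, basis_quad]
  simp only [Complex.add_re, Complex.re_ofReal_mul, Complex.mul_re, Complex.I_re,
    Complex.ofReal_im, Complex.I_im, Complex.ofReal_re]
  rw [ht]
  field_simp
  ring

lemma conj_row_quad (U A : Matrix (Fin N) (Fin N) ℂ) (i j : Fin N) :
    star (fun a => starRingEnd ℂ (U i a)) ⬝ᵥ A *ᵥ (fun a => starRingEnd ℂ (U j a))
      = (U * A * Uᴴ) i j := by
  simp only [Matrix.mul_apply, Matrix.conjTranspose_apply, dotProduct, Matrix.mulVec,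
    Pi.star_apply, RCLike.star_def, Complex.conj_conj, Finset.sum_mul, Finset.mul_sum]
  rw [Finset.sum_comm]
  exact Finset.sum_congr rfl fun a _ => Finset.sum_congr rfl fun e _ => by ring

lemma conj_row_dot (U : Matrix (Fin N) (Fin N) ℂ) (i j : Fin N) :
    star (fun a => starRingEnd ℂ (U i a)) ⬝ᵥ (fun a => starRingEnd ℂ (U j a))
      = (U * Uᴴ) i j := by
  have := conj_row_quad U 1 i j
  rwa [Matrix.one_mulVec, Matrix.mul_one] at this

lemma iso : ∀ (m : ℕ) (A : Matrix (Fin (m+1)) (Fin (m+1)) ℂ), A.trace = 0 →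
    ∃ v, star v ⬝ᵥ v = 1 ∧ star v ⬝ᵥ A *ᵥ v = 0 := by
  intro m A hA
  have htr' : Complex.reAddGroupHom A.trace = 0 := by rw [hA]; exact map_zero _
  obtain ⟨U, hU, hU0⟩ := horn_generic Complex.reAddGroupHom re_iso (m+1) A htr'
  simp only [Complex.reAddGroupHom, AddMonoidHom.coe_mk, ZeroHom.coe_mk] at hU0
  set B := U * A * Uᴴ with hB
  have htrB : B.trace = 0 := by
    rw [hB, Matrix.trace_mul_cycle, mul_eq_one_comm.mp hU, Matrix.one_mul, hA]
  set d : Fin (m+1) → ℝ := fun i => (B i i).im with hd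
  have hsum : ∑ i, d i = 0 := by
    have : B.trace.im = ∑ i, (B i i).im := by
      rw [Matrix.trace]
      exact Complex.im_sum _ _
    rw [htrB] at this
    simpa using this.symm
  obtain ⟨i₀, -, hmax⟩ := Finset.exists_max_image Finset.univ d ⟨0, Finset.mem_univ 0⟩
  obtain ⟨i₁, -, hmin⟩ := Finset.exists_min_image Finset.univ d ⟨0, Finset.mem_univ 0⟩
  have hle0 : d i₁ ≤ 0 := by
    by_contra hpos
    push_neg at hpos
    have h1 : ∑ _i : Fin (m+1), d i₁ ≤ ∑ i, d i :=
      Finset.sum_le_sum fun i _ => hmin i (Finset.mem_univ i)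
    rw [Finset.sum_const, hsum] at h1
    simp only [Finset.card_univ, Fintype.card_fin, nsmul_eq_mul] at h1
    have hcast : (0:ℝ) < ((m+1 : ℕ) : ℝ) := by positivity
    nlinarith [h1, mul_pos hcast hpos]
  have hge0 : 0 ≤ d i₀ := by
    by_contra hneg
    push_neg at hneg
    have h1 : ∑ i, d i ≤ ∑ _i : Fin (m+1), d i₀ :=
      Finset.sum_le_sum fun i _ => hmax i (Finset.mem_univ i)
    rw [Finset.sum_const, hsum] at h1
    simp only [Finset.card_univ, Fintype.card_fin, nsmul_eq_mul] at h1
    have hcast : (0:ℝ) < ((m+1 : ℕ) : ℝ) := by positivity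
    nlinarith [h1, mul_pos hcast (neg_pos.mpr hneg)]
  have hzero : ∀ i, (B i i).im = 0 → star (fun a => starRingEnd ℂ (U i a)) ⬝ᵥ A *ᵥ
      (fun a => starRingEnd ℂ (U i a)) = 0 := by
    intro i him
    rw [conj_row_quad]
    exact Complex.ext (hU0 i) him
  have hunit : ∀ i : Fin (m+1),
      star (fun a => starRingEnd ℂ (U i a)) ⬝ᵥ (fun a => starRingEnd ℂ (U i a)) = 1 := by
    intro i
    rw [conj_row_dot, hU, Matrix.one_apply_eq]
  by_cases h₀ : d i₀ = 0
  · exact ⟨_, hunit i₀, hzero i₀ h₀⟩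
  by_cases h₁ : d i₁ = 0
  · exact ⟨_, hunit i₁, hzero i₁ h₁⟩
  have hpos : 0 < d i₀ := lt_of_le_of_ne hge0 (Ne.symm h₀)
  have hneg : d i₁ < 0 := lt_of_le_of_ne hle0 h₁
  have hne : i₀ ≠ i₁ := fun h => by rw [h] at hpos; linarith
  have horthA : star (fun a => starRingEnd ℂ (U i₀ a)) ⬝ᵥ (fun a => starRingEnd ℂ (U i₁ a)) = 0 := by
    rw [conj_row_dot, hU, Matrix.one_apply_ne hne]
  have horthB : star (fun a => starRingEnd ℂ (U i₁ a)) ⬝ᵥ (fun a => starRingEnd ℂ (U i₀ a)) = 0 := by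
    rw [conj_row_dot, hU, Matrix.one_apply_ne hne.symm]
  obtain ⟨r, hr⟩ := combo A _ _ (hunit i₀) (hunit i₁) horthA horthB
  set g : ℝ → ℝ := fun t => (1-t) * d i₀ + t * d i₁ + Real.sqrt (t*(1-t)) * r with hg
  have hcont : ContinuousOn g (Set.Icc 0 1) := by
    apply Continuous.continuousOn
    have hsq : Continuous fun t : ℝ => Real.sqrt (t*(1-t)) :=
      Real.continuous_sqrt.comp (continuous_id.mul (continuous_const.sub continuous_id))
    exact (((continuous_const.sub continuous_id).mul continuous_const).add
      (continuous_id.mul continuous_const)).add (hsq.mul continuous_const)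
  have hg0 : g 0 = d i₀ := by simp [hg]
  have hg1 : g 1 = d i₁ := by simp [hg]
  have hmem : (0:ℝ) ∈ Set.Icc (g 1) (g 0) := by
    rw [hg0, hg1]; exact ⟨hle0, hge0⟩
  obtain ⟨t, htI, hgt⟩ := intermediate_value_Icc' (by norm_num : (0:ℝ) ≤ 1) hcont hmem
  obtain ⟨u, hu1, hu2⟩ := hr t htI.1 htI.2
  refine ⟨u, hu1, ?_⟩
  rw [hu2, conj_row_quad, conj_row_quad, ← hB]
  apply Complex.ext
  · simp only [Complex.add_re, Complex.re_ofReal_mul, Complex.mul_re, Complex.I_re,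
      Complex.ofReal_im, Complex.I_im, Complex.ofReal_re, Complex.zero_re]
    rw [hU0 i₀, hU0 i₁]
    ring
  · simp only [Complex.add_im, Complex.im_ofReal_mul, Complex.mul_im, Complex.I_re,
      Complex.ofReal_im, Complex.I_im, Complex.ofReal_re, Complex.zero_im]
    rw [hg] at hgt
    simp only [hd] at hgt
    nlinarith [hgt]

lemma horn : ∀ (n : ℕ) (A : Matrix (Fin n) (Fin n) ℂ), A.trace = 0 →
    ∃ U : Matrix (Fin n) (Fin n) ℂ, U * Uᴴ = 1 ∧ ∀ i, (U * A * Uᴴ) i i = 0 := by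
  have h := horn_generic (AddMonoidHom.id ℂ) (fun m A hA => iso m A hA)
  intro n A hA
  obtain ⟨U, h1, h2⟩ := h n A hA
  exact ⟨U, h1, h2⟩

lemma sum_pad {n M : ℕ} (hle : n ≤ M) (φ : Fin n → ℂ) :
    (∑ i : Fin M, if h : (i:ℕ) < n then φ ⟨i,h⟩ else 0) = ∑ i : Fin n, φ i := by
  have h1 := Fin.sum_univ_eq_sum_range (fun i => if h : i < n then φ ⟨i,h⟩ else 0) M
  have h2 := Fin.sum_univ_eq_sum_range (fun i => if h : i < n then φ ⟨i,h⟩ else 0) n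
  have h3 : ∑ i ∈ Finset.range n, (fun i => if h : i < n then φ ⟨i,h⟩ else 0) i
      = ∑ i ∈ Finset.range M, (fun i => if h : i < n then φ ⟨i,h⟩ else 0) i :=
    Finset.sum_subset (Finset.range_subset_range.2 hle) (fun x _ hx => dif_neg (by simpa using hx))
  have h4 : (∑ i : Fin n, if h : (i:ℕ) < n then φ ⟨i,h⟩ else 0) = ∑ i : Fin n, φ i :=
    Finset.sum_congr rfl (fun i _ => by rw [dif_pos i.2])
  exact h1.trans (h3.symm.trans (h2.symm.trans h4))

end

end HornAux

/-- Matrix form of the main theorem: if `trace (F Gᴴ) = 0` for `n×m` coefficient matrices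
`F`, `G` (`n ≥ 1`), then Alice can pad with zero rows up to some dimension `2^k ≥ n` and
find a unitary `U` such that, after applying `U`, corresponding rows of the two padded
coefficient matrices are orthogonal: every diagonal entry of `(U F₀) (U G₀)ᴴ` is zero. -/
theorem exists_unitary_row_orthogonalize (n m : ℕ) (hn : 1 ≤ n)
    (F G : Matrix (Fin n) (Fin m) ℂ) (h : (F * Gᴴ).trace = 0) :
    ∃ k : ℕ, n ≤ 2 ^ k ∧
      ∃ U ∈ Matrix.unitaryGroup (Fin (2 ^ k)) ℂ,
        ∀ i : Fin (2 ^ k),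
          ((U * Matrix.of fun (a : Fin (2 ^ k)) (b : Fin m) =>
              if h : (a : ℕ) < n then F ⟨a, h⟩ b else 0) *
            (U * Matrix.of fun (a : Fin (2 ^ k)) (b : Fin m) =>
              if h : (a : ℕ) < n then G ⟨a, h⟩ b else 0)ᴴ) i i = 0 := by
  classical
  have hle : n ≤ 2 ^ n := (Nat.lt_two_pow_self (n := n)).le
  refine ⟨n, hle, ?_⟩
  set F₀ : Matrix (Fin (2^n)) (Fin m) ℂ := Matrix.of fun (a : Fin (2 ^ n)) (b : Fin m) =>
    if h : (a : ℕ) < n then F ⟨a, h⟩ b else 0 with hF₀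
  set G₀ : Matrix (Fin (2^n)) (Fin m) ℂ := Matrix.of fun (a : Fin (2 ^ n)) (b : Fin m) =>
    if h : (a : ℕ) < n then G ⟨a, h⟩ b else 0 with hG₀
  have hdiag : ∀ i : Fin (2^n), (F₀ * G₀ᴴ) i i
      = (if h : (i:ℕ) < n then (F * Gᴴ) ⟨i,h⟩ ⟨i,h⟩ else 0) := by
    intro i
    rw [Matrix.mul_apply]
    by_cases hi : (i:ℕ) < n
    · rw [dif_pos hi, Matrix.mul_apply]
      apply Finset.sum_congr rfl
      intro j _
      rw [Matrix.conjTranspose_apply, Matrix.conjTranspose_apply, hF₀, hG₀,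
        Matrix.of_apply, Matrix.of_apply, dif_pos hi, dif_pos hi]
    · rw [dif_neg hi]
      apply Finset.sum_eq_zero
      intro j _
      rw [hF₀, Matrix.of_apply, dif_neg hi, zero_mul]
  have htr : (F₀ * G₀ᴴ).trace = 0 := by
    have e1 : (F₀ * G₀ᴴ).trace = ∑ i : Fin (2^n), (F₀ * G₀ᴴ) i i := rfl
    rw [e1, Finset.sum_congr rfl (fun i _ => hdiag i)]
    have hsp := HornAux.sum_pad hle (fun j => (F * Gᴴ) j j)
    exact hsp.trans h
  obtain ⟨U, hU1, hU2⟩ := HornAux.horn (2^n) (F₀ * G₀ᴴ) htr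
  refine ⟨U, ?_, ?_⟩
  · rw [Matrix.mem_unitaryGroup_iff]
    exact hU1
  · intro i
    have hconj : (U * F₀) * (U * G₀)ᴴ = U * (F₀ * G₀ᴴ) * Uᴴ := by
      rw [Matrix.conjTranspose_mul]
      simp only [Matrix.mul_assoc]
    rw [hconj]
    exact hU2 i
end

section
/- Let ψ and φ be orthogonal vectors in EuclideanSpace ℂ (Fin n × Fin m) with n ≥ 1, i.e., ⟪φ, ψ⟫ = 0. Then there exist a natural number k with l := 2^k ≥ n, an orthonormal family a : Fin l → EuclideanSpace ℂ (Fin l), and families of vectors η, ν : Fin l → EuclideanSpace ℂ (Fin m), such that: (1) for all (x, y) in Fin l × Fin m, ψ'(x, y) = Σ_i (a i) x · (η i) y and φ'(x, y) = Σ_i (a i) x · (ν i) y, where ψ', φ' in EuclideanSpace ℂ (Fin l × Fin m) are the images of ψ, φ under the embedding that sets all components with first index ≥ n to zero; and (2) ⟪ν i, η i⟫ = 0 for every i in Fin l. -/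
open scoped ComplexInnerProductSpace
open Complex ComplexConjugate

/-- Any traceless 2×2 sesquilinear form has an isotropic unit vector. -/
private lemma aux_two_by_two_traceless (a b c : ℂ) :
    ∃ z w : ℂ, Complex.normSq z + Complex.normSq w = 1 ∧
      conj z * z * a + conj z * w * b + conj w * z * c + conj w * w * (-a) = 0 := by
  by_cases ha : a = 0
  · exact ⟨1, 0, by simp, by simp [ha]⟩
  -- step 1: find θ with Im (conj a * (b * exp(θ i) + c * exp(-θ i))) = 0
  set g : ℝ → ℝ := fun θ => (conj a * (b * Complex.exp (θ * Complex.I)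
      + c * Complex.exp (-(θ * Complex.I)))).im with hg
  have hgc : Continuous g := by
    apply Complex.continuous_im.comp
    fun_prop
  have hanti : ∀ θ : ℝ, g (θ + Real.pi) = - g θ := by
    intro θ
    have h1 : ((θ + Real.pi : ℝ) : ℂ) * Complex.I = θ * Complex.I + Real.pi * Complex.I := by
      push_cast; ring
    have h2 : Complex.exp (((θ + Real.pi : ℝ) : ℂ) * Complex.I) = - Complex.exp (θ * Complex.I) := by
      rw [h1, Complex.exp_add, Complex.exp_pi_mul_I]; ring
    have h3 : Complex.exp (-(((θ + Real.pi : ℝ) : ℂ) * Complex.I)) = - Complex.exp (-(θ * Complex.I)) := by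
      rw [h1, neg_add, Complex.exp_add]
      have hx : Complex.exp (-((Real.pi:ℝ) * Complex.I)) = -1 := by
        rw [Complex.exp_neg, Complex.exp_pi_mul_I]; norm_num
      rw [hx]; ring
    simp only [hg, h2, h3]
    rw [show conj a * (b * -Complex.exp (θ * Complex.I) + c * -Complex.exp (-(θ * Complex.I)))
        = -(conj a * (b * Complex.exp (θ * Complex.I) + c * Complex.exp (-(θ * Complex.I)))) by ring]
    simp
  obtain ⟨θ, hθ⟩ : ∃ θ : ℝ, g θ = 0 := by
    rcases le_total (g 0) 0 with h0 | h0
    · have := intermediate_value_Icc (by positivity : (0:ℝ) ≤ Real.pi) hgc.continuousOn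
      have h1 : (0:ℝ) ∈ Set.Icc (g 0) (g Real.pi) := by
        constructor
        · exact h0
        · rw [show Real.pi = 0 + Real.pi by ring, hanti 0]; linarith
      obtain ⟨t, _, ht⟩ := this h1
      exact ⟨t, ht⟩
    · have := intermediate_value_Icc' (by positivity : (0:ℝ) ≤ Real.pi) hgc.continuousOn
      have h1 : (0:ℝ) ∈ Set.Icc (g Real.pi) (g 0) := by
        constructor
        · rw [show Real.pi = 0 + Real.pi by ring, hanti 0]; linarith
        · exact h0
      obtain ⟨t, _, ht⟩ := this h1
      exact ⟨t, ht⟩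
  set u : ℂ := b * Complex.exp (θ * Complex.I) + c * Complex.exp (-(θ * Complex.I)) with hu
  set r : ℝ := (conj a * u).re with hr
  have hre : conj a * u = (r : ℂ) := by
    apply Complex.ext
    · simp [hr]
    · simpa [hg, hu] using hθ
  -- step 2: IVT in t
  set h : ℝ → ℝ := fun t => Complex.normSq a * (Real.cos t ^ 2 - Real.sin t ^ 2)
      + Real.cos t * Real.sin t * r with hh
  have hhc : Continuous h := by fun_prop
  obtain ⟨t, ht⟩ : ∃ t : ℝ, h t = 0 := by
    have h0 : h 0 = Complex.normSq a := by simp [hh]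
    have h1 : h (Real.pi/2) = - Complex.normSq a := by simp [hh]
    have hpos : 0 < Complex.normSq a := Complex.normSq_pos.mpr ha
    have := intermediate_value_Icc' (by positivity : (0:ℝ) ≤ Real.pi/2) hhc.continuousOn
    have hmem : (0:ℝ) ∈ Set.Icc (h (Real.pi/2)) (h 0) := by
      rw [h0, h1]; constructor <;> linarith
    obtain ⟨t, _, ht⟩ := this hmem
    exact ⟨t, ht⟩
  refine ⟨((Real.cos t : ℝ) : ℂ), Complex.exp (θ * Complex.I) * ((Real.sin t : ℝ) : ℂ), ?_, ?_⟩
  · have he : Complex.normSq (Complex.exp (θ * Complex.I)) = 1 := by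
      rw [Complex.normSq_eq_norm_sq, Complex.norm_exp]
      simp
    rw [Complex.normSq_mul, he, Complex.normSq_ofReal, Complex.normSq_ofReal]
    nlinarith [Real.sin_sq_add_cos_sq t]
  · -- the quadratic form vanishes
    have key : conj a * (conj ((Real.cos t : ℝ) : ℂ) * ((Real.cos t : ℝ) : ℂ) * a
        + conj ((Real.cos t : ℝ) : ℂ) * (Complex.exp (θ * Complex.I) * ((Real.sin t : ℝ) : ℂ)) * b
        + conj (Complex.exp (θ * Complex.I) * ((Real.sin t : ℝ) : ℂ)) * ((Real.cos t : ℝ) : ℂ) * c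
        + conj (Complex.exp (θ * Complex.I) * ((Real.sin t : ℝ) : ℂ))
          * (Complex.exp (θ * Complex.I) * ((Real.sin t : ℝ) : ℂ)) * (-a)) = 0 := by
      have hconj : conj (Complex.exp ((θ:ℂ) * Complex.I)) = Complex.exp (-((θ:ℂ) * Complex.I)) := by
        rw [← Complex.exp_conj]
        congr 1
        simp [Complex.conj_I]
        try ring
      have hee : Complex.exp (-((θ:ℂ) * Complex.I)) * Complex.exp ((θ:ℂ) * Complex.I) = 1 := by
        rw [← Complex.exp_add]; simp
      simp only [map_mul, Complex.conj_ofReal, hconj]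
      have expand : conj a * (((Real.cos t : ℝ) : ℂ) * ((Real.cos t : ℝ) : ℂ) * a
          + ((Real.cos t : ℝ) : ℂ) * (Complex.exp (θ * Complex.I) * ((Real.sin t : ℝ) : ℂ)) * b
          + Complex.exp (-((θ:ℂ) * Complex.I)) * ((Real.sin t : ℝ) : ℂ) * ((Real.cos t : ℝ) : ℂ) * c
          + Complex.exp (-((θ:ℂ) * Complex.I)) * ((Real.sin t : ℝ) : ℂ)
            * (Complex.exp (θ * Complex.I) * ((Real.sin t : ℝ) : ℂ)) * (-a))
          = (Complex.normSq a : ℂ) * (((Real.cos t:ℝ):ℂ)^2 - ((Real.sin t:ℝ):ℂ)^2)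
            + ((Real.cos t:ℝ):ℂ) * ((Real.sin t:ℝ):ℂ) * (conj a * u)
            + (Complex.exp (-((θ:ℂ) * Complex.I)) * Complex.exp ((θ:ℂ) * Complex.I) - 1)
              * (((Real.sin t:ℝ):ℂ)^2 * (- (conj a * a))) := by
        rw [hu]
        rw [show (Complex.normSq a : ℂ) = conj a * a from Complex.normSq_eq_conj_mul_self]
        ring
      rw [expand, hee, hre]
      have ht' := congrArg (fun x : ℝ => (x : ℂ)) ht
      simp only [hh] at ht'
      simp only [Complex.ofReal_add, Complex.ofReal_mul, Complex.ofReal_sub,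
        Complex.ofReal_pow, Complex.ofReal_zero] at ht'
      linear_combination ht'
    have hane : conj a ≠ 0 := by simpa using ha
    exact (mul_eq_zero.mp key).resolve_left hane

variable {E : Type*} [NormedAddCommGroup E] [InnerProductSpace ℂ E]

lemma aux_inner_span_zero {s t : Set E} (h : ∀ a ∈ s, ∀ b ∈ t, ⟪a, b⟫ = 0) :
    ∀ x ∈ Submodule.span ℂ s, ∀ y ∈ Submodule.span ℂ t, ⟪x, y⟫ = 0 := by
  intro x hx
  induction hx using Submodule.span_induction with
  | mem a ha =>
      intro y hy
      induction hy using Submodule.span_induction with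
      | mem b hb => exact h a ha b hb
      | zero => simp
      | add y z _ _ iy iz => rw [inner_add_right, iy, iz, add_zero]
      | smul c y _ iy => rw [inner_smul_right, iy, mul_zero]
  | zero => simp
  | add y z _ _ iy iz => intro w hw; rw [inner_add_left, iy w hw, iz w hw, add_zero]
  | smul c y _ iy => intro w hw; rw [inner_smul_left, iy w hw, mul_zero]

lemma aux_two_by_two (a b c d : ℂ) :
    ∃ z w : ℂ, Complex.normSq z + Complex.normSq w = 1 ∧
      conj z * z * a + conj z * w * b + conj w * z * c + conj w * w * d = (a + d) / 2 := by
  obtain ⟨z, w, h1, h2⟩ := aux_two_by_two_traceless ((a - d)/2) b c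
  refine ⟨z, w, h1, ?_⟩
  have hzw : conj z * z + conj w * w = 1 := by
    rw [← Complex.normSq_eq_conj_mul_self, ← Complex.normSq_eq_conj_mul_self]
    exact_mod_cast congrArg (fun x : ℝ => (x : ℂ)) h1
  linear_combination h2 + ((a + d)/2) * hzw

lemma aux_rec (B : E → E → ℂ)
    (Hexp : ∀ (α β : ℂ) (p q : E), B (α • p + β • q) (α • p + β • q) =
      conj α * α * B p p + conj α * β * B p q + conj β * α * B q p + conj β * β * B q q)
    (k : ℕ) : ∀ (ι : Type) [Fintype ι] [DecidableEq ι], Fintype.card ι = 2 ^ k →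
    ∀ (v : ι → E), Orthonormal ℂ v →
    ∃ u : ι → E, Orthonormal ℂ u ∧ (∀ i, u i ∈ Submodule.span ℂ (Set.range v)) ∧
      ∀ i, (2 ^ k : ℂ) * B (u i) (u i) = ∑ j, B (v j) (v j) := by
  induction k with
  | zero =>
      intro ι _ _ hcard v hv
      refine ⟨v, hv, fun i => Submodule.subset_span ⟨i, rfl⟩, fun i => ?_⟩
      obtain ⟨x, hx⟩ := Fintype.card_eq_one_iff.mp hcard
      rw [show (Finset.univ : Finset ι) = {x} by ext y; simp [hx y], Finset.sum_singleton,
        show i = x from hx i]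
      norm_num
  | succ k ih =>
      intro ι _ _ hcard v hv
      -- reindex by Fin (2^k) × Fin 2
      have e : Fin (2 ^ k) × Fin 2 ≃ ι :=
        (finProdFinEquiv.trans (finCongr (by rw [pow_succ]))).trans
          (Fintype.equivFinOfCardEq hcard).symm
      set p : Fin (2 ^ k) → E := fun j => v (e (j, 0)) with hp
      set q : Fin (2 ^ k) → E := fun j => v (e (j, 1)) with hq
      have hone : ∀ x y : Fin (2 ^ k) × Fin 2, ⟪v (e x), v (e y)⟫ = if x = y then 1 else 0 :=
        orthonormal_iff_ite.mp (hv.comp e e.injective)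
      -- choose the 2x2 rotations
      choose z w hnorm hval using fun j =>
        aux_two_by_two (B (p j) (p j)) (B (p j) (q j)) (B (q j) (p j)) (B (q j) (q j))
      have hzw : ∀ j, conj (z j) * z j + conj (w j) * w j = 1 := by
        intro j
        rw [← Complex.normSq_eq_conj_mul_self, ← Complex.normSq_eq_conj_mul_self]
        exact_mod_cast congrArg (fun x : ℝ => (x : ℂ)) (hnorm j)
      set u0 : Fin (2 ^ k) → E := fun j => z j • p j + w j • q j with hu0
      set u1 : Fin (2 ^ k) → E := fun j => (-conj (w j)) • p j + (conj (z j)) • q j with hu1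
      -- B-values of rotated vectors
      have hBu0 : ∀ j, B (u0 j) (u0 j) = (B (p j) (p j) + B (q j) (q j)) / 2 := by
        intro j; rw [hu0]; simp only []; rw [Hexp]; exact hval j
      have hBu1 : ∀ j, B (u1 j) (u1 j) = (B (p j) (p j) + B (q j) (q j)) / 2 := by
        intro j; rw [hu1]; simp only []; rw [Hexp]
        simp only [map_neg, Complex.conj_conj]
        linear_combination (B (p j) (p j) + B (q j) (q j)) * hzw j - hval j
      -- inner products among rotated vectors
      have hpp : ∀ j j', ⟪p j, p j'⟫ = if j = j' then 1 else 0 := by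
        intro j j'; rw [hp]; simp only []; rw [hone (j,0) (j',0)]
        by_cases hjj : j = j' <;> simp [hjj, Prod.ext_iff]
      have hqq : ∀ j j', ⟪q j, q j'⟫ = if j = j' then 1 else 0 := by
        intro j j'; rw [hq]; simp only []; rw [hone (j,1) (j',1)]
        by_cases hjj : j = j' <;> simp [hjj, Prod.ext_iff]
      have hpq : ∀ j j', ⟪p j, q j'⟫ = 0 := by
        intro j j'; rw [hp, hq]; simp only []; rw [hone (j,0) (j',1)]
        simp [Prod.ext_iff]
      have hqp : ∀ j j', ⟪q j, p j'⟫ = 0 := by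
        intro j j'; rw [hp, hq]; simp only []; rw [hone (j,1) (j',0)]
        simp [Prod.ext_iff]
      have hinner00 : ∀ j j', ⟪u0 j, u0 j'⟫ = if j = j' then 1 else 0 := by
        intro j j'
        rw [hu0]; simp only []
        simp only [inner_add_left, inner_add_right, inner_smul_left, inner_smul_right,
          hpp, hqq, hpq, hqp]
        by_cases hjj : j = j'
        · subst hjj; simp only [eq_self_iff_true, if_true]; linear_combination hzw j
        · simp only [if_neg hjj]; ring
      have hinner11 : ∀ j j', ⟪u1 j, u1 j'⟫ = if j = j' then 1 else 0 := by
        intro j j'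
        rw [hu1]; simp only []
        simp only [inner_add_left, inner_add_right, inner_smul_left, inner_smul_right,
          hpp, hqq, hpq, hqp]
        simp only [map_neg, Complex.conj_conj]
        by_cases hjj : j = j'
        · subst hjj; simp only [eq_self_iff_true, if_true]; linear_combination hzw j
        · simp only [if_neg hjj]; ring
      have hinner01 : ∀ j j', ⟪u0 j, u1 j'⟫ = 0 := by
        intro j j'
        rw [hu0, hu1]; simp only []
        simp only [inner_add_left, inner_add_right, inner_smul_left, inner_smul_right,
          hpp, hqq, hpq, hqp]
        by_cases hjj : j = j'
        · subst hjj; simp only [eq_self_iff_true, if_true]; ring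
        · simp only [if_neg hjj]; ring
      -- apply induction hypothesis to each half
      obtain ⟨U0, hU0on, hU0span, hU0val⟩ := ih (Fin (2 ^ k)) (Fintype.card_fin _)
        u0 (orthonormal_iff_ite.mpr hinner00)
      obtain ⟨U1, hU1on, hU1span, hU1val⟩ := ih (Fin (2 ^ k)) (Fintype.card_fin _)
        u1 (orthonormal_iff_ite.mpr hinner11)
      -- cross orthogonality
      have hcross : ∀ j j', ⟪U0 j, U1 j'⟫ = 0 := by
        intro j j'
        refine aux_inner_span_zero ?_ _ (hU0span j) _ (hU1span j')
        rintro _ ⟨a, rfl⟩ _ ⟨b, rfl⟩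
        exact hinner01 a b
      -- spans inside span of range v
      have hspan0 : Submodule.span ℂ (Set.range u0) ≤ Submodule.span ℂ (Set.range v) := by
        rw [Submodule.span_le]
        rintro _ ⟨j, rfl⟩
        exact Submodule.add_mem _
          (Submodule.smul_mem _ _ (Submodule.subset_span ⟨e (j, 0), rfl⟩))
          (Submodule.smul_mem _ _ (Submodule.subset_span ⟨e (j, 1), rfl⟩))
      have hspan1 : Submodule.span ℂ (Set.range u1) ≤ Submodule.span ℂ (Set.range v) := by
        rw [Submodule.span_le]
        rintro _ ⟨j, rfl⟩
        exact Submodule.add_mem _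
          (Submodule.smul_mem _ _ (Submodule.subset_span ⟨e (j, 0), rfl⟩))
          (Submodule.smul_mem _ _ (Submodule.subset_span ⟨e (j, 1), rfl⟩))
      -- final family
      set u : ι → E := fun i =>
        if (e.symm i).2 = 0 then U0 (e.symm i).1 else U1 (e.symm i).1 with hu
      -- total sum
      have hsum : ∑ i : ι, B (v i) (v i)
          = ∑ j : Fin (2 ^ k), (B (p j) (p j) + B (q j) (q j)) := by
        rw [← Equiv.sum_comp e (fun i => B (v i) (v i)), Fintype.sum_prod_type]
        congr 1; ext j
        rw [Fin.sum_univ_two]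
      have hval0 : ∀ j, (2 ^ (k+1) : ℂ) * B (U0 j) (U0 j) = ∑ i : ι, B (v i) (v i) := by
        intro j
        have h2 : ∑ j' : Fin (2^k), B (u0 j') (u0 j')
            = (∑ j' : Fin (2^k), (B (p j') (p j') + B (q j') (q j'))) / 2 := by
          rw [Finset.sum_div]
          exact Finset.sum_congr rfl fun j' _ => hBu0 j'
        rw [hsum, show ((2:ℂ) ^ (k+1)) = 2 * 2 ^ k by ring]
        rw [mul_assoc, hU0val j, h2]
        ring
      have hval1 : ∀ j, (2 ^ (k+1) : ℂ) * B (U1 j) (U1 j) = ∑ i : ι, B (v i) (v i) := by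
        intro j
        have h2 : ∑ j' : Fin (2^k), B (u1 j') (u1 j')
            = (∑ j' : Fin (2^k), (B (p j') (p j') + B (q j') (q j'))) / 2 := by
          rw [Finset.sum_div]
          exact Finset.sum_congr rfl fun j' _ => hBu1 j'
        rw [hsum, show ((2:ℂ) ^ (k+1)) = 2 * 2 ^ k by ring]
        rw [mul_assoc, hU1val j, h2]
        ring
      refine ⟨u, ?_, ?_, ?_⟩
      · -- orthonormality
        rw [orthonormal_iff_ite]
        intro i i'
        have hi : i = e (e.symm i) := (e.apply_symm_apply i).symm
        have hi' : i' = e (e.symm i') := (e.apply_symm_apply i').symm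
        have heq : (i = i') ↔ (e.symm i = e.symm i') := by
          constructor
          · intro hh; rw [hh]
          · intro hh; rw [hi, hi', hh]
        rw [hu]; simp only []
        by_cases h2 : (e.symm i).2 = 0 <;> by_cases h2' : (e.symm i').2 = 0
        · rw [if_pos h2, if_pos h2', orthonormal_iff_ite.mp hU0on]
          have : (e.symm i = e.symm i') ↔ ((e.symm i).1 = (e.symm i').1) := by
            rw [Prod.ext_iff]; simp [h2, h2']
          by_cases hjj : (e.symm i).1 = (e.symm i').1
          · rw [if_pos hjj, if_pos (heq.mpr (this.mpr hjj))]
          · rw [if_neg hjj, if_neg (fun hc => hjj (this.mp (heq.mp hc)))]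
        · rw [if_pos h2, if_neg h2', hcross]
          rw [if_neg (fun hc => h2' (by rw [← heq.mp hc] at h2'; exact absurd h2 h2'))]
        · rw [if_neg h2, if_pos h2', inner_eq_zero_symm.mp (hcross _ _)]
          rw [if_neg (fun hc => h2 (by rw [heq.mp hc]; exact h2'))]
        · rw [if_neg h2, if_neg h2', orthonormal_iff_ite.mp hU1on]
          have h2b : (e.symm i).2 = 1 := by omega
          have h2b' : (e.symm i').2 = 1 := by omega
          have : (e.symm i = e.symm i') ↔ ((e.symm i).1 = (e.symm i').1) := by
            rw [Prod.ext_iff]; simp [h2b, h2b']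
          by_cases hjj : (e.symm i).1 = (e.symm i').1
          · rw [if_pos hjj, if_pos (heq.mpr (this.mpr hjj))]
          · rw [if_neg hjj, if_neg (fun hc => hjj (this.mp (heq.mp hc)))]
      · -- span
        intro i
        rw [hu]; simp only []
        by_cases h2 : (e.symm i).2 = 0
        · rw [if_pos h2]; exact hspan0 (hU0span _)
        · rw [if_neg h2]; exact hspan1 (hU1span _)
      · -- values
        intro i
        rw [hu]; simp only []
        by_cases h2 : (e.symm i).2 = 0
        · rw [if_pos h2]; exact hval0 _
        · rw [if_neg h2]; exact hval1 _

/-- State-vector form of the main theorem: two orthogonal bipartite states `ψ`, `φ`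
(Alice dimension `n ≥ 1`, Bob dimension `m`) can, after enlarging Alice's space to
dimension `l = 2^k ≥ n` by zero-padding, be written as `ψ' = Σ_i |a_i⟩|η_i⟩` and
`φ' = Σ_i |a_i⟩|ν_i⟩` with `{a_i}` an orthonormal family and `⟪ν_i, η_i⟫ = 0` for all
`i`: Alice measures in the basis `{a_i}` and Bob finishes the discrimination locally. -/
theorem orthogonal_states_locally_distinguishable (n m : ℕ) (hn : 1 ≤ n)
    (ψ φ : EuclideanSpace ℂ (Fin n × Fin m)) (h : ⟪φ, ψ⟫ = 0) :
    ∃ k : ℕ, n ≤ 2 ^ k ∧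
      ∃ a : Fin (2 ^ k) → EuclideanSpace ℂ (Fin (2 ^ k)),
        Orthonormal ℂ a ∧
        ∃ η ν : Fin (2 ^ k) → EuclideanSpace ℂ (Fin m),
          (∀ (x : Fin (2 ^ k)) (y : Fin m),
            (if h : (x : ℕ) < n then ψ (⟨(x : ℕ), h⟩, y) else 0) =
              ∑ i : Fin (2 ^ k), a i x * η i y) ∧
          (∀ (x : Fin (2 ^ k)) (y : Fin m),
            (if h : (x : ℕ) < n then φ (⟨(x : ℕ), h⟩, y) else 0) =
              ∑ i : Fin (2 ^ k), a i x * ν i y) ∧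
          (∀ i : Fin (2 ^ k), ⟪ν i, η i⟫ = 0) := by
  refine ⟨n, (Nat.lt_two_pow_self (n := n)).le, ?_⟩
  set l := 2 ^ n with hl
  have hln : n ≤ l := (Nat.lt_two_pow_self (n := n)).le
  -- zero-padded states
  set ψ' : Fin l → Fin m → ℂ :=
    fun x y => if h : (x : ℕ) < n then ψ (⟨(x : ℕ), h⟩, y) else 0 with hψ'
  set φ' : Fin l → Fin m → ℂ :=
    fun x y => if h : (x : ℕ) < n then φ (⟨(x : ℕ), h⟩, y) else 0 with hφ'
  -- the sesquilinear form
  set N : Fin l → Fin l → ℂ := fun x x' => ∑ y, conj (φ' x y) * ψ' x' y with hN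
  set B : EuclideanSpace ℂ (Fin l) → EuclideanSpace ℂ (Fin l) → ℂ :=
    fun u w => ∑ x, ∑ x', conj (u x') * N x x' * w x with hB
  have Hexp : ∀ (α β : ℂ) (p q : EuclideanSpace ℂ (Fin l)),
      B (α • p + β • q) (α • p + β • q) =
        conj α * α * B p p + conj α * β * B p q + conj β * α * B q p + conj β * β * B q q := by
    intro α β p q
    rw [hB]
    simp only [PiLp.add_apply, PiLp.smul_apply, smul_eq_mul, map_add, map_mul,
      Finset.mul_sum, ← Finset.sum_add_distrib]
    refine Finset.sum_congr rfl fun x _ => Finset.sum_congr rfl fun x' _ => by ring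
  -- trace is zero
  have htr : ∑ x : Fin l, B (EuclideanSpace.single x 1) (EuclideanSpace.single x 1) = 0 := by
    have hdiag : ∀ x : Fin l, B (EuclideanSpace.single x 1) (EuclideanSpace.single x 1)
        = N x x := by
      intro x
      rw [hB]
      simp only [EuclideanSpace.single_apply]
      rw [Finset.sum_eq_single x]
      · rw [Finset.sum_eq_single x]
        · simp
        · intro b _ hb; simp [hb]
        · intro hx; exact absurd (Finset.mem_univ x) hx
      · intro b _ hb
        rw [Finset.sum_eq_single x]
        · simp [hb]
        · intro c _ hc; simp [hc]
        · intro hx; exact absurd (Finset.mem_univ x) hx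
      · intro hx; exact absurd (Finset.mem_univ x) hx
    simp only [hdiag]
    -- ∑ x, N x x = ⟪φ, ψ⟫ = 0
    set emb : Fin n ↪ Fin l := ⟨Fin.castLE hln, Fin.castLE_injective hln⟩ with hemb
    have hco : ∀ x : Fin n, ((emb x : Fin l) : ℕ) = (x : ℕ) := by
      intro x; rw [hemb]; rfl
    have hzero : ∀ x : Fin l, x ∉ Finset.univ.map emb → N x x = 0 := by
      intro x hx
      have hxn : ¬ ((x : ℕ) < n) := by
        intro hlt
        apply hx
        rw [Finset.mem_map]
        refine ⟨⟨(x : ℕ), hlt⟩, Finset.mem_univ _, ?_⟩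
        exact Fin.ext (hco ⟨(x : ℕ), hlt⟩)
      rw [hN]
      simp only [hφ', hψ', dif_neg hxn]
      simp
    have h1 : ∑ x : Fin l, N x x = ∑ x ∈ Finset.univ.map emb, N x x := by
      refine (Finset.sum_subset (Finset.subset_univ _) ?_).symm
      intro x _ hx; exact hzero x hx
    rw [h1, Finset.sum_map]
    have h2 : ∀ x : Fin n, N (emb x) (emb x) = ∑ y, conj (φ (x, y)) * ψ (x, y) := by
      intro x
      rw [hN]
      refine Finset.sum_congr rfl fun y _ => ?_
      have hx : ((emb x : Fin l) : ℕ) < n := by rw [hco]; exact x.isLt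
      simp only [hφ', hψ', dif_pos hx]
      have hfx : (⟨((emb x : Fin l) : ℕ), hx⟩ : Fin n) = x := Fin.ext (hco x)
      rw [hfx]
    simp only [h2]
    have h3 : (⟪φ, ψ⟫ : ℂ) = ∑ x : Fin n, ∑ y : Fin m, conj (φ (x, y)) * ψ (x, y) := by
      rw [PiLp.inner_apply]
      simp only [RCLike.inner_apply]
      rw [Fintype.sum_prod_type]
      exact Finset.sum_congr rfl fun _ _ => Finset.sum_congr rfl fun _ _ => mul_comm _ _
    rw [← h3]
    exact h
  -- apply the recursion to the standard basis
  have honb : Orthonormal ℂ (fun x : Fin l => EuclideanSpace.single x (1:ℂ)) := by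
    have := (EuclideanSpace.basisFun (Fin l) ℂ).orthonormal
    rw [show (fun x : Fin l => EuclideanSpace.single x (1:ℂ)) = ⇑(EuclideanSpace.basisFun (Fin l) ℂ) from
      funext fun x => by simp [EuclideanSpace.basisFun_apply]]
    exact this
  obtain ⟨a, haon, -, haval⟩ := aux_rec B Hexp n (Fin l) (Fintype.card_fin _)
    (fun x => EuclideanSpace.single x 1) honb
  have hBa : ∀ i, B (a i) (a i) = 0 := by
    intro i
    have h2 := haval i
    rw [htr] at h2
    exact (mul_eq_zero.mp h2).resolve_left (pow_ne_zero n two_ne_zero)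
  -- completeness relation
  set A : Matrix (Fin l) (Fin l) ℂ := Matrix.of (fun x i => a i x) with hA
  have hA1 : A.conjTranspose * A = 1 := by
    ext i j
    rw [Matrix.mul_apply, Matrix.one_apply]
    have h5 := orthonormal_iff_ite.mp haon i j
    rw [PiLp.inner_apply] at h5
    simp only [RCLike.inner_apply] at h5
    simp only [Matrix.conjTranspose_apply, hA, Matrix.of_apply, RCLike.star_def]
    rw [← h5]; exact Finset.sum_congr rfl fun _ _ => mul_comm _ _
  have hA2 : A * A.conjTranspose = 1 := mul_eq_one_comm.mp hA1
  have C : ∀ x x' : Fin l, ∑ i, a i x * conj (a i x') = if x = x' then 1 else 0 := by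
    intro x x'
    have h4 : (A * A.conjTranspose) x x' = (1 : Matrix (Fin l) (Fin l) ℂ) x x' := by rw [hA2]
    rw [Matrix.mul_apply, Matrix.one_apply] at h4
    simp only [Matrix.conjTranspose_apply, hA, Matrix.of_apply, RCLike.star_def] at h4
    exact h4
  -- the Bob-side families
  set η : Fin l → EuclideanSpace ℂ (Fin m) :=
    fun i => WithLp.toLp 2 (fun y => ∑ x, conj (a i x) * ψ' x y) with hη
  set ν : Fin l → EuclideanSpace ℂ (Fin m) :=
    fun i => WithLp.toLp 2 (fun y => ∑ x, conj (a i x) * φ' x y) with hν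
  have key : ∀ (f : Fin l → Fin m → ℂ) (x : Fin l) (y : Fin m),
      ∑ i, a i x * (∑ x', conj (a i x') * f x' y) = f x y := by
    intro f x y
    calc ∑ i, a i x * (∑ x', conj (a i x') * f x' y)
        = ∑ i, ∑ x', a i x * conj (a i x') * f x' y := by
          refine Finset.sum_congr rfl fun i _ => ?_
          rw [Finset.mul_sum]
          refine Finset.sum_congr rfl fun x' _ => by ring
      _ = ∑ x', ∑ i, a i x * conj (a i x') * f x' y := Finset.sum_comm
      _ = ∑ x', (∑ i, a i x * conj (a i x')) * f x' y := by
          refine Finset.sum_congr rfl fun x' _ => ?_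
          rw [Finset.sum_mul]
      _ = ∑ x', (if x = x' then 1 else 0) * f x' y := by
          refine Finset.sum_congr rfl fun x' _ => by rw [C]
      _ = f x y := by
          simp [Finset.sum_ite_eq]
  refine ⟨a, haon, η, ν, ?_, ?_, ?_⟩
  · intro x y
    show ψ' x y = ∑ i, a i x * η i y
    exact (key ψ' x y).symm
  · intro x y
    show φ' x y = ∑ i, a i x * ν i y
    exact (key φ' x y).symm
  · intro i
    rw [PiLp.inner_apply]
    simp only [RCLike.inner_apply]
    have hconj : ∀ y, conj (ν i y) = ∑ x, a i x * conj (φ' x y) := by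
      intro y
      show conj (∑ x, conj (a i x) * φ' x y) = _
      rw [map_sum]
      refine Finset.sum_congr rfl fun x _ => ?_
      rw [map_mul, Complex.conj_conj]
    have hmain : ∑ y, conj (ν i y) * η i y = B (a i) (a i) := by
      calc ∑ y, conj (ν i y) * η i y
          = ∑ y, (∑ x, a i x * conj (φ' x y)) * (∑ x', conj (a i x') * ψ' x' y) := by
            refine Finset.sum_congr rfl fun y _ => ?_
            rw [hconj y]
        _ = ∑ y, ∑ x, ∑ x', (a i x * conj (φ' x y)) * (conj (a i x') * ψ' x' y) := by
            refine Finset.sum_congr rfl fun y _ => ?_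
            rw [Finset.sum_mul]
            refine Finset.sum_congr rfl fun x _ => ?_
            rw [Finset.mul_sum]
        _ = ∑ x, ∑ x', ∑ y, (a i x * conj (φ' x y)) * (conj (a i x') * ψ' x' y) := by
            rw [Finset.sum_comm]
            refine Finset.sum_congr rfl fun x _ => Finset.sum_comm
        _ = B (a i) (a i) := by
            rw [hB]
            refine Finset.sum_congr rfl fun x _ => Finset.sum_congr rfl fun x' _ => ?_
            rw [hN]
            beta_reduce
            simp only [Finset.mul_sum, Finset.sum_mul]
            refine Finset.sum_congr rfl fun y _ => by ring
    refine Eq.trans ?_ (hmain.trans (hBa i))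
    exact Finset.sum_congr rfl fun _ _ => mul_comm _ _
end

section
/- Let ψ and φ be orthogonal vectors in EuclideanSpace ℂ (Fin n × (Fin m × Fin p)) with n ≥ 1 (a tripartite state shared by Alice, Bob, and Claire). Then there exist a natural number k with l := 2^k ≥ n, an orthonormal family a : Fin l → EuclideanSpace ℂ (Fin l), and families Γ, Γ' : Fin l → EuclideanSpace ℂ (Fin m × Fin p), such that: (1) the images ψ', φ' of ψ, φ under the zero-padding embedding into EuclideanSpace ℂ (Fin l × (Fin m × Fin p)) satisfy ψ'(x, w) = Σ_i (a i) x · (Γ i) w and φ'(x, w) = Σ_i (a i) x · (Γ' i) w for all x, w; and (2) ⟪Γ' i, Γ i⟫ = 0 for every i in Fin l. -/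
open scoped ComplexInnerProductSpace

open Finset

local notation "cj" => starRingEnd ℂ

section LocalDistinguishAux

lemma real_aux' (r : ℝ) : ∃ s t : ℝ, s^2 + t^2 = 1 ∧ s^2 - t^2 + r*(s*t) = 0 := by
  set q : ℝ := (r + Real.sqrt (r^2 + 4)) / 2 with hq
  have hsq : Real.sqrt (r^2+4) ^ 2 = r^2 + 4 := Real.sq_sqrt (by positivity)
  have hqq : q^2 - r*q - 1 = 0 := by rw [hq]; nlinarith [hsq]
  set S : ℝ := Real.sqrt (1 + q^2) with hS
  have hS2 : S^2 = 1 + q^2 := Real.sq_sqrt (by positivity)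
  have hSne : S ≠ 0 := by positivity
  refine ⟨1/S, q/S, ?_, ?_⟩
  · field_simp
    linarith [hS2]
  · have h1 : (1/S)^2 - (q/S)^2 + r*((1/S)*(q/S)) = (1 - q^2 + r*q)/S^2 := by
      field_simp
    rw [h1]
    have h2 : 1 - q^2 + r*q = 0 := by linarith [hqq]
    rw [h2, zero_div]

lemma unit_aux' (δ : ℂ) : ∃ z : ℂ, cj z * z = 1 ∧ cj (δ * z) = δ * z := by
  by_cases hd : δ = 0
  · exact ⟨1, by simp, by simp [hd]⟩
  · have habs : ((‖δ‖ : ℝ) : ℂ) ≠ 0 := by simpa using hd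
    refine ⟨cj δ / ((‖δ‖ : ℝ) : ℂ), ?_, ?_⟩
    · rw [map_div₀, Complex.conj_conj, Complex.conj_ofReal]
      field_simp
      rw [Complex.mul_conj, Complex.normSq_eq_norm_sq]
      push_cast; ring
    · rw [map_mul, map_div₀, Complex.conj_conj, Complex.conj_ofReal]
      field_simp

lemma good_two_aux' (a B C : ℂ) (ha : a ≠ 0) :
    ∃ (s t : ℝ) (z : ℂ), cj z * z = 1 ∧ (s:ℂ)^2 + (t:ℂ)^2 = 1 ∧
      a * ((s:ℂ)^2 - (t:ℂ)^2) + (s:ℂ)*(t:ℂ)*(B*z + C*cj z) = 0 := by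
  obtain ⟨z, hzu, hreal⟩ := unit_aux' (B/a - cj (C/a))
  have hwreal : cj ((B/a) * z + (C/a) * cj z) = (B/a) * z + (C/a) * cj z := by
    have h1 : ((B/a) * z + (C/a) * cj z) - cj ((B/a) * z + (C/a) * cj z)
        = (B/a - cj (C/a)) * z - cj ((B/a - cj (C/a)) * z) := by
      simp only [map_add, map_mul, map_sub, Complex.conj_conj]
      ring
    rw [hreal, sub_self] at h1
    exact (sub_eq_zero.mp h1).symm
  obtain ⟨r, hwr⟩ : ∃ r : ℝ, (B/a) * z + (C/a) * cj z = (r:ℂ) :=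
    ⟨_, (Complex.conj_eq_iff_re.mp hwreal).symm⟩
  have hE : B * z + C * cj z = a * (r : ℂ) := by
    rw [← hwr]; field_simp
  obtain ⟨s, t, hst, hst2⟩ := real_aux' r
  have hstC : (s:ℂ)^2 + (t:ℂ)^2 = 1 := by exact_mod_cast congrArg Complex.ofReal hst
  have hst2C : (s:ℂ)^2 - (t:ℂ)^2 + (r:ℂ)*((s:ℂ)*(t:ℂ)) = 0 := by
    exact_mod_cast congrArg Complex.ofReal hst2
  refine ⟨s, t, z, hzu, hstC, ?_⟩
  rw [hE]
  linear_combination a * hst2C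

def RawON {ι : Type} [Fintype ι] [DecidableEq ι] (b : ι → ι → ℂ) : Prop :=
  ∀ i j, (∑ x, cj (b i x) * b j x) = if i = j then 1 else 0

def Good (ι : Type) [Fintype ι] [DecidableEq ι] : Prop :=
  ∀ M : ι → ι → ℂ, (∑ i, M i i) = 0 →
    ∃ b : ι → ι → ℂ, RawON b ∧ ∀ i, (∑ x, ∑ y, cj (b i x) * M x y * b i y) = 0

lemma good_one' : Good (Fin 1) := by
  intro M hM
  refine ⟨fun _ _ => 1, ?_, ?_⟩
  · intro i j
    simp [Fin.fin_one_eq_zero i, Fin.fin_one_eq_zero j]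
  · intro i
    simpa using hM

lemma good_equiv' {ι κ : Type} [Fintype ι] [DecidableEq ι] [Fintype κ] [DecidableEq κ]
    (e : ι ≃ κ) (hι : Good ι) : Good κ := by
  intro M hM
  obtain ⟨b, hb, hbd⟩ := hι (fun i j => M (e i) (e j)) (by
    rw [← hM]; exact Fintype.sum_equiv e _ _ (fun i => rfl))
  refine ⟨fun j x => b (e.symm j) (e.symm x), ?_, ?_⟩
  · intro i j
    have := hb (e.symm i) (e.symm j)
    rw [Fintype.sum_equiv e.symm (fun x => cj (b (e.symm i) (e.symm x)) * b (e.symm j) (e.symm x))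
      (fun x => cj (b (e.symm i) x) * b (e.symm j) x) (fun x => rfl), this]
    simp [e.symm.injective.eq_iff]
  · intro i
    have := hbd (e.symm i)
    calc ∑ x, ∑ y, cj (b (e.symm i) (e.symm x)) * M x y * b (e.symm i) (e.symm y)
        = ∑ p, ∑ q, cj (b (e.symm i) p) * M (e p) (e q) * b (e.symm i) q := by
          refine (Fintype.sum_equiv e _ _ ?_).symm
          intro p
          refine Fintype.sum_equiv e _ _ ?_
          intro q
          simp
      _ = 0 := this

lemma good_two' : Good (Fin 2) := by
  intro M hM
  rw [Fin.sum_univ_two] at hM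
  have h11 : M 1 1 = -M 0 0 := by linear_combination hM
  by_cases ha : M 0 0 = 0
  · refine ⟨fun i j => if i = j then 1 else 0, ?_, ?_⟩
    · intro i j
      fin_cases i <;> fin_cases j <;> simp [Fin.sum_univ_two]
    · intro i
      fin_cases i <;>
        simp [Fin.sum_univ_two, ha, h11]
  · obtain ⟨s, t, z, hz, hn, hd⟩ := good_two_aux' (M 0 0) (M 0 1) (M 1 0) ha
    refine ⟨![![(s:ℂ), (t:ℂ)*z], ![-((t:ℂ)*cj z), (s:ℂ)]], ?_, ?_⟩
    · intro i j
      fin_cases i <;> fin_cases j <;>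
        simp [Fin.sum_univ_two, Complex.conj_ofReal]
      · linear_combination (t:ℂ)^2 * hz + hn
      · ring
      · ring
      · linear_combination (t:ℂ)^2 * hz + hn
    · intro i
      fin_cases i <;>
        simp [Fin.sum_univ_two, Complex.conj_ofReal]
      · linear_combination hd + (t:ℂ)^2*(cj z * z)*h11 - (M 0 0)*(t:ℂ)^2*hz
      · linear_combination -hd + (M 0 0)*(t:ℂ)^2*hz + (s:ℂ)^2*h11

lemma good_prod' {ι κ : Type} [Fintype ι] [DecidableEq ι] [Fintype κ] [DecidableEq κ]
    (hι : Good ι) (hκ : Good κ) : Good (ι × κ) := by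
  intro M hM
  obtain ⟨u, hu, hud⟩ := hι (fun s t => ∑ x, M (s, x) (t, x)) (by
    rw [← hM, Fintype.sum_prod_type])
  have htrA : ∀ i, ∑ x, (∑ s, ∑ t, cj (u i s) * M (s,x) (t,x) * u i t) = 0 := by
    intro i
    calc ∑ x, ∑ s, ∑ t, cj (u i s) * M (s,x) (t,x) * u i t
        = ∑ s, ∑ t, ∑ x, cj (u i s) * M (s,x) (t,x) * u i t := by
          rw [Finset.sum_comm]
          exact Finset.sum_congr rfl fun s _ => Finset.sum_comm
      _ = ∑ s, ∑ t, cj (u i s) * (∑ x, M (s,x) (t,x)) * u i t := by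
          refine Finset.sum_congr rfl fun s _ => Finset.sum_congr rfl fun t _ => ?_
          rw [Finset.mul_sum, Finset.sum_mul]
      _ = 0 := hud i
  choose c hc hcd using fun i =>
    hκ (fun x y => ∑ s, ∑ t, cj (u i s) * M (s,x) (t,y) * u i t) (htrA i)
  have expand : ∀ (F : ι → κ → ι → κ → ℂ),
      (∑ q : ι×κ, ∑ q' : ι×κ, F q.1 q.2 q'.1 q'.2) = ∑ s, ∑ x, ∑ t, ∑ y, F s x t y := by
    intro F
    rw [Fintype.sum_prod_type]
    exact Finset.sum_congr rfl fun s _ => Finset.sum_congr rfl fun x _ =>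
      Fintype.sum_prod_type _
  have comm4 : ∀ (F : ι → κ → ι → κ → ℂ),
      (∑ s, ∑ x, ∑ t, ∑ y, F s x t y) = ∑ x, ∑ y, ∑ s, ∑ t, F s x t y := by
    intro F
    rw [Finset.sum_comm]
    refine Finset.sum_congr rfl fun x _ => ?_
    calc ∑ s, ∑ t, ∑ y, F s x t y
        = ∑ s, ∑ y, ∑ t, F s x t y :=
          Finset.sum_congr rfl fun s _ => Finset.sum_comm
      _ = ∑ y, ∑ s, ∑ t, F s x t y := Finset.sum_comm
  refine ⟨fun P Q => u P.1 Q.1 * c P.1 P.2 Q.2, ?_, ?_⟩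
  · rintro ⟨i, j⟩ ⟨i', j'⟩
    have hsep : (∑ q : ι × κ, cj (u i q.1 * c i j q.2) * (u i' q.1 * c i' j' q.2))
        = (∑ s, cj (u i s) * u i' s) * (∑ x, cj (c i j x) * c i' j' x) := by
      rw [Finset.sum_mul_sum, Fintype.sum_prod_type]
      refine Finset.sum_congr rfl fun s _ => Finset.sum_congr rfl fun x _ => ?_
      simp only [map_mul]; ring
    rw [hsep, hu i i']
    by_cases hii : i = i'
    · subst hii
      rw [if_pos rfl, one_mul, hc i j j']
      simp [Prod.ext_iff]
    · rw [if_neg hii, zero_mul]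
      simp [Prod.ext_iff, hii]
  · rintro ⟨i, j⟩
    calc (∑ q : ι×κ, ∑ q' : ι×κ,
          cj (u i q.1 * c i j q.2) * M q q' * (u i q'.1 * c i j q'.2))
        = ∑ s, ∑ x, ∑ t, ∑ y,
            cj (u i s * c i j x) * M (s,x) (t,y) * (u i t * c i j y) :=
          expand (fun s x t y => cj (u i s * c i j x) * M (s,x) (t,y) * (u i t * c i j y))
      _ = ∑ x, ∑ y, ∑ s, ∑ t,
            cj (u i s * c i j x) * M (s,x) (t,y) * (u i t * c i j y) :=
          comm4 (fun s x t y => cj (u i s * c i j x) * M (s,x) (t,y) * (u i t * c i j y))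
      _ = ∑ x, ∑ y, cj (c i j x) *
            (∑ s, ∑ t, cj (u i s) * M (s,x) (t,y) * u i t) * c i j y := by
          simp only [Finset.mul_sum, Finset.sum_mul, map_mul]
          exact Finset.sum_congr rfl fun x _ => Finset.sum_congr rfl fun y _ =>
            Finset.sum_congr rfl fun s _ => Finset.sum_congr rfl fun t _ => by ring
      _ = 0 := hcd i j

lemma good_pow' : ∀ k : ℕ, Good (Fin (2^k))
  | 0 => good_equiv' (finCongr (by norm_num)) good_one'
  | (k+1) =>
      good_equiv' ((finProdFinEquiv).trans (finCongr (by rw [pow_succ, Nat.mul_comm])))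
        (good_prod' good_two' (good_pow' k))

lemma rawON_complete' {ι : Type} [Fintype ι] [DecidableEq ι] (b : ι → ι → ℂ)
    (hb : RawON b) (x y : ι) :
    (∑ i, b i x * cj (b i y)) = if x = y then 1 else 0 := by
  let A : Matrix ι ι ℂ := Matrix.of b
  have h1 : (A.map (starRingEnd ℂ)) * A.transpose = 1 := by
    ext i j
    simpa [Matrix.mul_apply, A, Matrix.one_apply] using hb i j
  have h2 : A.transpose * (A.map (starRingEnd ℂ)) = 1 := mul_eq_one_comm.mp h1
  have h3 := congrFun (congrFun (congrArg (fun (X : Matrix ι ι ℂ) i j => X i j) h2) x) y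
  simpa [Matrix.mul_apply, A, Matrix.one_apply, mul_comm] using h3

end LocalDistinguishAux


/-- Multipartite reduction of the main theorem: two orthogonal tripartite states `ψ`, `φ`
shared by Alice (dimension `n ≥ 1`), Bob (dimension `m`) and Claire (dimension `p`) can,
after enlarging Alice's space to dimension `l = 2^k ≥ n` by zero-padding, be written as
`ψ' = Σ_i |a_i⟩|Γ_i⟩` and `φ' = Σ_i |a_i⟩|Γ'_i⟩` with `{a_i}` an orthonormal family and
`⟪Γ'_i, Γ_i⟫ = 0` for all `i`: after Alice's measurement, Bob and Claire are left with one
of two orthogonal bipartite states and the problem cascades to the bipartite case. -/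
theorem orthogonal_tripartite_states_locally_distinguishable (n m p : ℕ) (hn : 1 ≤ n)
    (ψ φ : EuclideanSpace ℂ (Fin n × (Fin m × Fin p))) (h : ⟪φ, ψ⟫ = 0) :
    ∃ k : ℕ, n ≤ 2 ^ k ∧
      ∃ a : Fin (2 ^ k) → EuclideanSpace ℂ (Fin (2 ^ k)),
        Orthonormal ℂ a ∧
        ∃ Γ Γ' : Fin (2 ^ k) → EuclideanSpace ℂ (Fin m × Fin p),
          (∀ (x : Fin (2 ^ k)) (w : Fin m × Fin p),
            (if h : (x : ℕ) < n then ψ (⟨(x : ℕ), h⟩, w) else 0) =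
              ∑ i : Fin (2 ^ k), a i x * Γ i w) ∧
          (∀ (x : Fin (2 ^ k)) (w : Fin m × Fin p),
            (if h : (x : ℕ) < n then φ (⟨(x : ℕ), h⟩, w) else 0) =
              ∑ i : Fin (2 ^ k), a i x * Γ' i w) ∧
          (∀ i : Fin (2 ^ k), ⟪Γ' i, Γ i⟫ = 0) := by
  classical
  have hn2 : n ≤ 2 ^ n := (Nat.lt_two_pow_self (n := n)).le
  refine ⟨n, hn2, ?_⟩
  let ψp : Fin (2^n) → (Fin m × Fin p) → ℂ := fun x w =>
    if h : (x : ℕ) < n then ψ (⟨(x:ℕ), h⟩, w) else 0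
  let φp : Fin (2^n) → (Fin m × Fin p) → ℂ := fun x w =>
    if h : (x : ℕ) < n then φ (⟨(x:ℕ), h⟩, w) else 0
  let N : Fin (2^n) → Fin (2^n) → ℂ := fun x y => ∑ w, cj (φp y w) * ψp x w
  have htr : (∑ x, N x x) = 0 := by
    have hinner : (∑ v : Fin n, ∑ w : Fin m × Fin p, cj (φ (v, w)) * ψ (v, w)) = 0 := by
      have h' := h
      rw [PiLp.inner_apply] at h'
      simp only [RCLike.inner_apply] at h'
      rw [Fintype.sum_prod_type] at h'
      exact (Finset.sum_congr rfl fun _ _ => Finset.sum_congr rfl fun _ _ => mul_comm _ _).trans h'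
    have hzero : ∀ x : Fin (2^n), ¬ ((x:ℕ) < n) → N x x = 0 := by
      intro x hx
      simp [N, φp, ψp, dif_neg hx]
    calc ∑ x, N x x
        = ∑ x ∈ Finset.univ.map (Fin.castLEEmb hn2), N x x := by
          refine (Finset.sum_subset (Finset.subset_univ _) ?_).symm
          intro x _ hx
          refine hzero x fun hlt => hx ?_
          exact Finset.mem_map.mpr ⟨⟨(x:ℕ), hlt⟩, Finset.mem_univ _, by ext; simp⟩
      _ = ∑ v : Fin n, N (Fin.castLEEmb hn2 v) (Fin.castLEEmb hn2 v) :=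
          Finset.sum_map _ _ _
      _ = ∑ v : Fin n, ∑ w, cj (φ (v, w)) * ψ (v, w) := by
          refine Finset.sum_congr rfl fun v _ => Finset.sum_congr rfl fun w _ => ?_
          have hv : ((Fin.castLEEmb hn2 v : Fin (2^n)) : ℕ) < n := v.isLt
          simp only [N, φp, ψp, dif_pos hv]
          congr 1
      _ = 0 := hinner
  obtain ⟨b, hb, hbd⟩ := good_pow' n N htr
  refine ⟨fun i => (WithLp.toLp 2 (fun x => b i x) : EuclideanSpace ℂ (Fin (2^n))), ?_,
    (fun i => (WithLp.toLp 2 (fun w => ∑ y, cj (b i y) * ψp y w) : EuclideanSpace ℂ (Fin m × Fin p))),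
    (fun i => (WithLp.toLp 2 (fun w => ∑ y, cj (b i y) * φp y w) : EuclideanSpace ℂ (Fin m × Fin p))),
    ?_, ?_, ?_⟩
  · rw [orthonormal_iff_ite]
    intro i j
    rw [PiLp.inner_apply]
    simp only [RCLike.inner_apply]
    exact (Finset.sum_congr rfl fun _ _ => mul_comm _ _).trans (hb i j)
  · intro x w
    show ψp x w = ∑ i, b i x * (∑ y, cj (b i y) * ψp y w)
    have hc : (∑ i, b i x * (∑ y, cj (b i y) * ψp y w))
        = ∑ y, (∑ i, b i x * cj (b i y)) * ψp y w := by
      simp only [Finset.mul_sum, Finset.sum_mul]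
      rw [Finset.sum_comm]
      exact Finset.sum_congr rfl fun y _ => Finset.sum_congr rfl fun i _ => by ring
    rw [hc]
    simp only [fun y => rawON_complete' b hb x y]
    simp
  · intro x w
    show φp x w = ∑ i, b i x * (∑ y, cj (b i y) * φp y w)
    have hc : (∑ i, b i x * (∑ y, cj (b i y) * φp y w))
        = ∑ y, (∑ i, b i x * cj (b i y)) * φp y w := by
      simp only [Finset.mul_sum, Finset.sum_mul]
      rw [Finset.sum_comm]
      exact Finset.sum_congr rfl fun y _ => Finset.sum_congr rfl fun i _ => by ring
    rw [hc]
    simp only [fun y => rawON_complete' b hb x y]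
    simp
  · intro i
    rw [PiLp.inner_apply]
    simp only [RCLike.inner_apply]
    show (∑ w, (∑ y, cj (b i y) * ψp y w) * cj (∑ x, cj (b i x) * φp x w)) = 0
    rw [Finset.sum_congr rfl fun w _ => mul_comm (∑ y, cj (b i y) * ψp y w) (cj (∑ x, cj (b i x) * φp x w))]
    have step1 : ∀ w, cj (∑ x, cj (b i x) * φp x w) * (∑ y, cj (b i y) * ψp y w)
        = ∑ x, ∑ y, (b i x * cj (φp x w)) * (cj (b i y) * ψp y w) := by
      intro w
      rw [map_sum, Finset.sum_mul_sum]
      refine Finset.sum_congr rfl fun x _ => Finset.sum_congr rfl fun y _ => ?_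
      simp only [map_mul, Complex.conj_conj]
    calc (∑ w, cj (∑ x, cj (b i x) * φp x w) * (∑ y, cj (b i y) * ψp y w))
        = ∑ w, ∑ x, ∑ y, (b i x * cj (φp x w)) * (cj (b i y) * ψp y w) :=
          Finset.sum_congr rfl fun w _ => step1 w
      _ = ∑ x, ∑ w, ∑ y, (b i x * cj (φp x w)) * (cj (b i y) * ψp y w) :=
          Finset.sum_comm
      _ = ∑ x, ∑ y, ∑ w, (b i x * cj (φp x w)) * (cj (b i y) * ψp y w) :=
          Finset.sum_congr rfl fun x _ => Finset.sum_comm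
      _ = ∑ y, ∑ x, ∑ w, (b i x * cj (φp x w)) * (cj (b i y) * ψp y w) :=
          Finset.sum_comm
      _ = ∑ x, ∑ y, cj (b i x) * N x y * b i y := by
          refine Finset.sum_congr rfl fun x _ => Finset.sum_congr rfl fun y _ => ?_
          simp only [N, Finset.mul_sum, Finset.sum_mul]
          exact Finset.sum_congr rfl fun w _ => by ring
      _ = 0 := hbd i
end
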